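/- arXiv:1303.4345 — 5 statements merged into one kernel-verified Lean document; each statement's English description precedes it below -/
import Mathlib

section
/- The function λ ↦ spr(A_λ) is monotonically decreasing on (−inf a, ∞): if λ ≥ μ > −inf a then spr(A_λ) ≤ spr(A_μ). -/
open MeasureTheory ENNReal Set Filter

set_option synthInstance.maxHeartbeats 1000000
set_option maxHeartbeats 2000000
set_option linter.unusedVariables false

namespace Stmt7Aux

variable {α : Type*} [MeasurableSpace α] {ν : MeasureTheory.Measure α}


abbrev Bop (ν : MeasureTheory.Measure α) : Type _ := Lp ℝ 1 ν →L[ℝ] Lp ℝ 1 ν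

/-- Positivity of an operator on `L¹`. -/
def Pos (T : Lp ℝ 1 ν →L[ℝ] Lp ℝ 1 ν) : Prop := ∀ u : Lp ℝ 1 ν, 0 ≤ u → 0 ≤ T u

lemma lp_smul_nonneg {c : ℝ} (hc : 0 ≤ c) {u : Lp ℝ 1 ν} (hu : 0 ≤ u) : 0 ≤ c • u := by
  rw [← Lp.coeFn_nonneg] at hu ⊢
  filter_upwards [hu, Lp.coeFn_smul c u] with x hx h2
  rw [h2]
  exact mul_nonneg hc hx

lemma Pos.add {S T : Lp ℝ 1 ν →L[ℝ] Lp ℝ 1 ν} (hS : Pos S) (hT : Pos T) : Pos (S + T) := by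
  intro u hu
  rw [ContinuousLinearMap.add_apply]
  exact add_nonneg (hS u hu) (hT u hu)

lemma Pos.mul {S T : Lp ℝ 1 ν →L[ℝ] Lp ℝ 1 ν} (hS : Pos S) (hT : Pos T) : Pos (S * T) := by
  intro u hu
  exact hS (T u) (hT u hu)

lemma Pos.smul {S : Lp ℝ 1 ν →L[ℝ] Lp ℝ 1 ν} {c : ℝ} (hc : 0 ≤ c) (hS : Pos S) :
    Pos (c • S) := by
  intro u hu
  rw [ContinuousLinearMap.smul_apply]
  exact lp_smul_nonneg hc (hS u hu)

lemma Pos.one : Pos (1 : Lp ℝ 1 ν →L[ℝ] Lp ℝ 1 ν) := fun u hu => hu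

lemma Pos.pow {S : Lp ℝ 1 ν →L[ℝ] Lp ℝ 1 ν} (hS : Pos S) (n : ℕ) : Pos (S ^ n) := by
  induction n with
  | zero => simpa using Pos.one
  | succ n ih => rw [pow_succ]; exact ih.mul hS

lemma Pos.of_tendsto {f : ℕ → (Lp ℝ 1 ν →L[ℝ] Lp ℝ 1 ν)} {T : Lp ℝ 1 ν →L[ℝ] Lp ℝ 1 ν}
    (hf : ∀ n, Pos (f n)) (h : Tendsto f atTop (nhds T)) : Pos T := by
  intro u hu
  have h2 : Tendsto (fun n => f n u) atTop (nhds (T u)) :=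
    ((ContinuousLinearMap.apply ℝ (Lp ℝ 1 ν) u).continuous.tendsto T).comp h
  have hcl : IsClosed {v : Lp ℝ 1 ν | 0 ≤ v} := isClosed_le continuous_const continuous_id
  exact hcl.mem_of_tendsto h2 (Eventually.of_forall fun n => hf n u hu)

lemma Pos.zero : Pos (0 : Lp ℝ 1 ν →L[ℝ] Lp ℝ 1 ν) := by
  intro u hu
  rw [ContinuousLinearMap.zero_apply]

lemma Pos.sum {s : Finset ℕ} {f : ℕ → (Lp ℝ 1 ν →L[ℝ] Lp ℝ 1 ν)} (hf : ∀ n, Pos (f n)) :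
    Pos (∑ n ∈ s, f n) := by
  classical
  induction s using Finset.induction with
  | empty => simpa using Pos.zero
  | insert _ _ hx ih => rw [Finset.sum_insert hx]; exact (hf _).add ih

lemma Pos.tsum {f : ℕ → (Lp ℝ 1 ν →L[ℝ] Lp ℝ 1 ν)} (hf : ∀ n, Pos (f n))
    (hsum : Summable f) : Pos (∑' n, f n) :=
  Pos.of_tendsto (fun n => Pos.sum hf) hsum.hasSum.tendsto_sum_nat

lemma Pos.abs_apply_le {S : Lp ℝ 1 ν →L[ℝ] Lp ℝ 1 ν} (hS : Pos S) (u : Lp ℝ 1 ν) :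
    |S u| ≤ S |u| := by
  have h1 : S u = S u⁺ - S u⁻ := by rw [← map_sub, posPart_sub_negPart]
  have h2 : |S u| ≤ |S u⁺| + |S u⁻| := by
    rw [h1, sub_eq_add_neg]
    have := abs_add_le (S u⁺) (-(S u⁻))
    rwa [abs_neg] at this
  have h3 : |S u⁺| = S u⁺ := abs_of_nonneg (hS _ (posPart_nonneg u))
  have h4 : |S u⁻| = S u⁻ := abs_of_nonneg (hS _ (negPart_nonneg u))
  calc |S u| ≤ S u⁺ + S u⁻ := by rw [← h3, ← h4]; exact h2
    _ = S |u| := by rw [← map_add, posPart_add_negPart]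

lemma Pos.norm_le {S T : Lp ℝ 1 ν →L[ℝ] Lp ℝ 1 ν} (hS : Pos S) (hTS : Pos (T - S)) :
    ‖S‖ ≤ ‖T‖ := by
  have hT : Pos T := by
    intro u hu
    have h1 := hTS u hu
    rw [ContinuousLinearMap.sub_apply, sub_nonneg] at h1
    exact (hS u hu).trans h1
  refine ContinuousLinearMap.opNorm_le_bound S (norm_nonneg T) fun u => ?_
  have hSu : S (abs u) ≤ T (abs u) := by
    have h0 := hTS (abs u) (abs_nonneg u)
    rw [ContinuousLinearMap.sub_apply, sub_nonneg] at h0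
    exact h0
  have h1 : |S u| ≤ |T (abs u)| := by
    refine (hS.abs_apply_le u).trans ?_
    rw [abs_of_nonneg (hT _ (abs_nonneg u))]
    exact hSu
  calc ‖S u‖ = ‖|S u|‖ := (norm_abs_eq_norm _).symm
    _ ≤ ‖|T (abs u)|‖ := norm_le_norm_of_abs_le_abs ((abs_abs _).trans_le (h1.trans_eq (abs_abs _).symm))
    _ = ‖T (abs u)‖ := norm_abs_eq_norm _
    _ ≤ ‖T‖ * ‖abs u‖ := T.le_opNorm _
    _ = ‖T‖ * ‖u‖ := by rw [norm_abs_eq_norm]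

lemma step (T : Lp ℝ 1 ν →L[ℝ] Lp ℝ 1 ν) (t d : ℝ) (hd : 0 ≤ d)
    (hu : IsUnit (t • (1 : Bop ν) - T))
    (hR : Pos (Ring.inverse (t • (1 : Bop ν) - T)))
    (hsmall : d * ‖Ring.inverse (t • (1 : Bop ν) - T)‖ < 1) :
    IsUnit ((t - d) • (1 : Bop ν) - T) ∧
      Pos (Ring.inverse ((t - d) • (1 : Bop ν) - T)) := by
  set R : Bop ν := Ring.inverse (t • (1 : Bop ν) - T) with hRdef
  have hnorm : ‖d • R‖ < 1 := by
    refine (norm_smul_le d R).trans_lt ?_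
    rwa [Real.norm_of_nonneg hd]
  have hfact : (1 - d • R) * (t • (1 : Bop ν) - T) = (t - d) • (1 : Bop ν) - T := by
    have h1 : R * (t • (1 : Bop ν) - T) = 1 := Ring.inverse_mul_cancel _ hu
    rw [sub_mul, one_mul, smul_mul_assoc, h1, sub_smul, sub_right_comm]
  have hUnit : IsUnit ((t - d) • (1 : Bop ν) - T) := by
    rw [← hfact]
    exact (isUnit_one_sub_of_norm_lt_one hnorm).mul hu
  refine ⟨hUnit, ?_⟩
  set u1 : (Bop ν)ˣ := Units.oneSub (d • R) hnorm with hu1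
  have hval : ((t - d) • (1 : Bop ν) - T) = ↑(u1 * hu.unit) := by
    rw [Units.val_mul, hu.unit_spec, Units.val_oneSub, hfact]
  rw [hval, Ring.inverse_unit, mul_inv_rev, Units.val_mul]
  have h2 : (↑hu.unit⁻¹ : Bop ν) = R := by
    rw [← Ring.inverse_unit hu.unit, hu.unit_spec, hRdef]
  have h3 : (↑u1⁻¹ : Bop ν) = ∑' n, (d • R) ^ n := by
    rw [hu1, ← NormedRing.inverse_one_sub (d • R) hnorm, ← geom_series_eq_inverse _ hnorm]
  rw [h2, h3]
  exact hR.mul (Pos.tsum (fun n => (Pos.smul hd hR).pow n)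
    (summable_geometric_of_norm_lt_one hnorm))

lemma neumann (T : Lp ℝ 1 ν →L[ℝ] Lp ℝ 1 ν) (hT : Pos T) (t : ℝ) (ht : ‖T‖ < t) :
    IsUnit (t • (1 : Bop ν) - T) ∧
      Pos (Ring.inverse (t • (1 : Bop ν) - T)) := by
  have ht0 : 0 < t := (norm_nonneg T).trans_lt ht
  have hnorm : ‖t⁻¹ • T‖ < 1 := by
    refine (norm_smul_le t⁻¹ T).trans_lt ?_
    rw [norm_inv, Real.norm_of_nonneg ht0.le, inv_mul_lt_iff₀ ht0, mul_one]
    exact ht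
  have hmul1 : (t • (1 : Bop ν)) * (t⁻¹ • (1 : Bop ν)) = 1 := by
    rw [smul_mul_assoc, one_mul, smul_smul, mul_inv_cancel₀ ht0.ne', one_smul]
  have hmul2 : (t⁻¹ • (1 : Bop ν)) * (t • (1 : Bop ν)) = 1 := by
    rw [smul_mul_assoc, one_mul, smul_smul, inv_mul_cancel₀ ht0.ne', one_smul]
  set uT : (Bop ν)ˣ := ⟨t • (1 : Bop ν), t⁻¹ • (1 : Bop ν), hmul1, hmul2⟩ with huT
  set uG : (Bop ν)ˣ := Units.oneSub (t⁻¹ • T) hnorm with huG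
  have hfact : t • (1 : Bop ν) - T = ↑(uT * uG) := by
    rw [Units.val_mul, huT, huG, Units.val_oneSub]
    show t • (1 : Bop ν) - T = (t • (1 : Bop ν)) * (1 - t⁻¹ • T)
    rw [smul_mul_assoc, one_mul, smul_sub, smul_smul, mul_inv_cancel₀ ht0.ne', one_smul]
  constructor
  · rw [hfact]; exact Units.isUnit _
  · rw [hfact, Ring.inverse_unit, mul_inv_rev, Units.val_mul]
    have h3 : (↑uG⁻¹ : Bop ν) = ∑' n, (t⁻¹ • T) ^ n := by
      rw [huG, ← NormedRing.inverse_one_sub (t⁻¹ • T) hnorm, ← geom_series_eq_inverse _ hnorm]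
    have h4 : (↑uT⁻¹ : Bop ν) = t⁻¹ • (1 : Bop ν) := rfl
    rw [h3, h4]
    exact (Pos.tsum (fun n => (Pos.smul (by positivity) hT).pow n)
      (summable_geometric_of_norm_lt_one hnorm)).mul
      (Pos.smul (by positivity) Pos.one)

lemma pos_resolvent (T : Bop ν) (hT : Pos T) (μ : ℝ) (hμ : 0 < μ)
    (hres : ∀ t : ℝ, μ ≤ t → IsUnit (t • (1 : Bop ν) - T)) :
    Pos (Ring.inverse (μ • (1 : Bop ν) - T)) := by
  set t0 : ℝ := ‖T‖ + μ with ht0def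
  have hμt0 : μ ≤ t0 := le_add_of_nonneg_left (norm_nonneg T)
  have hcont : ContinuousOn (fun s : ℝ => Ring.inverse (s • (1 : Bop ν) - T))
      (Icc μ t0) := by
    intro s hs
    have hU := hres s hs.1
    have h1 : ContinuousAt (fun s : ℝ => s • (1 : Bop ν) - T) s :=
      ((continuous_id.smul continuous_const).sub continuous_const).continuousAt
    have h2 : ContinuousAt (Ring.inverse : Bop ν → Bop ν) (s • (1 : Bop ν) - T) := by
      have := NormedRing.inverse_continuousAt hU.unit
      rwa [hU.unit_spec] at this
    have h3 := ContinuousAt.comp (g := (Ring.inverse : Bop ν → Bop ν))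
      (f := fun s : ℝ => s • (1 : Bop ν) - T) (x := s) h2 h1
    exact h3.continuousWithinAt
  obtain ⟨C, hC⟩ := isCompact_Icc.exists_bound_of_continuousOn hcont
  have hC0 : 0 ≤ C := le_trans (norm_nonneg _) (hC μ ⟨le_refl μ, hμt0⟩)
  set δ : ℝ := 1 / (C + 1) with hδdef
  have hδ0 : 0 < δ := by positivity
  have hδC : δ * C < 1 := by
    rw [hδdef, div_mul_eq_mul_div, one_mul, div_lt_one (by linarith)]
    linarith
  have key : ∀ k : ℕ, Pos (Ring.inverse ((max μ (t0 - k * δ)) • (1 : Bop ν) - T)) := by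
    intro k
    induction k with
    | zero =>
      have h0 : max μ (t0 - (0 : ℕ) * δ) = t0 := by
        rw [Nat.cast_zero, zero_mul, sub_zero]
        exact max_eq_right hμt0
      rw [h0]
      exact (neumann T hT t0 (by rw [ht0def]; linarith)).2
    | succ k ih =>
      set s : ℝ := max μ (t0 - k * δ) with hsdef
      set s' : ℝ := max μ (t0 - (k + 1 : ℕ) * δ) with hs'def
      have hs'μ : μ ≤ s' := le_max_left _ _
      have hsμ : μ ≤ s := le_max_left _ _
      have hss' : s' ≤ s := by
        apply max_le (le_max_left _ _)
        refine le_trans ?_ (le_max_right _ _)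
        have : (k : ℝ) * δ ≤ (k + 1 : ℕ) * δ := by
          push_cast; nlinarith [hδ0.le]
        linarith
      have hsd : s - s' ≤ δ := by
        have h1 : s ≤ s' + δ := by
          apply max_le (by linarith)
          have h2 : t0 - (k + 1 : ℕ) * δ ≤ s' := le_max_right _ _
          push_cast at h2 ⊢
          linarith
        linarith
      have hsIcc : s ∈ Icc μ t0 := by
        refine ⟨hsμ, max_le hμt0 ?_⟩
        have : (0 : ℝ) ≤ (k : ℝ) * δ := by positivity
        linarith
      have hsmall : (s - s') * ‖Ring.inverse (s • (1 : Bop ν) - T)‖ < 1 := by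
        have h2 := hC _ hsIcc
        have h3 : (s - s') * ‖Ring.inverse (s • (1 : Bop ν) - T)‖ ≤ δ * C :=
          mul_le_mul hsd h2 (norm_nonneg _) hδ0.le
        linarith
      have hstep := step T s (s - s') (by linarith) (hres s hsμ) ih hsmall
      have hfin : s - (s - s') = s' := by ring
      rw [hfin] at hstep
      exact hstep.2
  obtain ⟨k, hk⟩ := exists_nat_ge ((t0 - μ) / δ)
  have hfin : max μ (t0 - k * δ) = μ := by
    apply max_eq_left
    rw [div_le_iff₀ hδ0] at hk
    linarith
  have h := key k
  rwa [hfin] at h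

lemma pow_bound (T : Bop ν) (hT : Pos T) (μ : ℝ) (hμ : 0 < μ)
    (hu : IsUnit (μ • (1 : Bop ν) - T))
    (hR : Pos (Ring.inverse (μ • (1 : Bop ν) - T))) (n : ℕ) :
    Pos (μ ^ (n + 1) • Ring.inverse (μ • (1 : Bop ν) - T) - T ^ n) := by
  set R : Bop ν := Ring.inverse (μ • (1 : Bop ν) - T) with hRdef
  have hid : μ • R = 1 + T * R := by
    have h1 : (μ • (1 : Bop ν) - T) * R = 1 := Ring.mul_inverse_cancel _ hu
    rw [sub_mul, smul_mul_assoc, one_mul] at h1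
    have h2 := sub_eq_iff_eq_add.mp h1
    exact h2
  induction n with
  | zero =>
    have h0 : μ ^ 1 • R - T ^ 0 = T * R := by
      rw [pow_one, pow_zero, hid]; abel
    rw [h0]; exact hT.mul hR
  | succ n ih =>
    have heq : μ ^ (n + 1 + 1) • R - T ^ (n + 1)
        = μ ^ (n + 1) • (1 : Bop ν) + T * (μ ^ (n + 1) • R - T ^ n) := by
      have h1 : μ ^ (n + 1) • (1 : Bop ν) + T * (μ ^ (n + 1) • R - T ^ n)
          = μ ^ (n + 1) • ((1 : Bop ν) + T * R) - T ^ (n + 1) := by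
        rw [mul_sub, mul_smul_comm, smul_add, pow_succ' T n]
        abel
      rw [h1, ← hid, smul_smul, ← pow_succ]
    rw [heq]
    exact (Pos.smul (by positivity) Pos.one).add (hT.mul ih)

lemma pow_compare {S T : Bop ν} (hS : Pos S) (hT : Pos T) (hTS : Pos (T - S)) (n : ℕ) :
    Pos (T ^ n - S ^ n) := by
  induction n with
  | zero => simp only [pow_zero, sub_self]; exact Pos.zero
  | succ n ih =>
    have heq : T ^ (n + 1) - S ^ (n + 1) = T * (T ^ n - S ^ n) + (T - S) * S ^ n := by
      rw [pow_succ' T n, pow_succ' S n]; noncomm_ring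
    rw [heq]
    exact (hT.mul ih).add (hTS.mul (hS.pow n))

end Stmt7Aux

open Stmt7Aux

/-- λ ↦ spr(A_λ) is monotonically decreasing on (−inf a, ∞):
if λ ≥ μ > −inf a then spr(A_λ) ≤ spr(A_μ). -/
theorem stmt_7
    (Ω : Set ℝ) (hΩ : MeasurableSet Ω)
    (a : ℝ → ℝ) (ha : Continuous a)
    (c c' : ℝ) (hc0 : 0 < c) (hcc' : c < c')
    (hbound : ∀ x ∈ Ω, c < a x ∧ a x < c')
    (J : ℝ → ℝ → ℝ) (hJmeas : Measurable (Function.uncurry J))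
    (hJnonneg : ∀ x y, 0 ≤ J x y)
    (𝒥 : Lp ℝ 1 (volume.restrict Ω) →L[ℝ] Lp ℝ 1 (volume.restrict Ω))
    (h𝒥 : ∀ u : Lp ℝ 1 (volume.restrict Ω),
      ⇑(𝒥 u) =ᵐ[volume.restrict Ω] fun x => ∫ y in Ω, J x y * u y)
    (A : ℝ → (Lp ℝ 1 (volume.restrict Ω) →L[ℝ] Lp ℝ 1 (volume.restrict Ω)))
    (hA : ∀ l : ℝ, -sInf (a '' Ω) < l → ∀ u : Lp ℝ 1 (volume.restrict Ω),
      ⇑(A l u) =ᵐ[volume.restrict Ω] fun x => (𝒥 u) x / (l + a x))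
    (l m : ℝ) (hm : -sInf (a '' Ω) < m) (hlm : m ≤ l) :
    spectralRadius ℝ (A l) ≤ spectralRadius ℝ (A m) := by
  classical
  rcases subsingleton_or_nontrivial (Lp ℝ 1 (volume.restrict Ω)) with hsub | hnt
  · haveI : Subsingleton (Lp ℝ 1 (volume.restrict Ω) →L[ℝ] Lp ℝ 1 (volume.restrict Ω)) :=
      ⟨fun f g => ContinuousLinearMap.ext fun x => Subsingleton.elim _ _⟩
    rw [Subsingleton.elim (A l) (A m)]
  have hl : -sInf (a '' Ω) < l := hm.trans_le hlm
  -- positivity of denominators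
  have hden : ∀ l' : ℝ, -sInf (a '' Ω) < l' → ∀ x ∈ Ω, 0 < l' + a x := by
    intro l' hl' x hx
    have hbdd : BddBelow (a '' Ω) := ⟨c, by rintro z ⟨y, hy, rfl⟩; exact (hbound y hy).1.le⟩
    have h1 : sInf (a '' Ω) ≤ a x := csInf_le hbdd ⟨x, hx, rfl⟩
    linarith
  -- nonnegativity of the kernel integral
  have hJint : ∀ u : Lp ℝ 1 (volume.restrict Ω), 0 ≤ u →
      ∀ x : ℝ, 0 ≤ ∫ y in Ω, J x y * u y := by
    intro u hu x
    apply integral_nonneg_of_ae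
    have hu' : (0 : ℝ → ℝ) ≤ᵐ[volume.restrict Ω] ⇑u := (Lp.coeFn_nonneg u).2 hu
    filter_upwards [hu'] with y hy
    exact mul_nonneg (hJnonneg x y) hy
  -- positivity of A l'
  have hPos : ∀ l' : ℝ, -sInf (a '' Ω) < l' → Pos (A l') := by
    intro l' hl' u hu
    rw [← Lp.coeFn_nonneg]
    filter_upwards [hA l' hl' u, h𝒥 u, ae_restrict_mem hΩ] with x h1 h2 hx
    rw [Pi.zero_apply, h1, h2]
    exact div_nonneg (hJint u hu x) (hden l' hl' x hx).le
  have hPosl : Pos (A l) := hPos l hl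
  have hPosm : Pos (A m) := hPos m hm
  -- positivity of the difference
  have hPosDiff : Pos (A m - A l) := by
    intro u hu
    rw [ContinuousLinearMap.sub_apply, ← Lp.coeFn_nonneg]
    filter_upwards [Lp.coeFn_sub (A m u) (A l u), hA m hm u, hA l hl u, h𝒥 u,
      ae_restrict_mem hΩ] with x h0 h1 h2 h3 hx
    rw [Pi.zero_apply, h0, Pi.sub_apply, h1, h2, h3]
    rw [sub_nonneg]
    exact div_le_div_of_nonneg_left (hJint u hu x) (hden m hm x hx)
      (by linarith)
  -- main argument
  by_contra hcon
  push_neg at hcon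
  obtain ⟨μnn, hμ1, hμ2⟩ := ENNReal.lt_iff_exists_nnreal_btwn.mp hcon
  have hμpos : 0 < (μnn : ℝ) := by
    have h0 : (0 : ℝ≥0∞) < (μnn : ℝ≥0∞) := zero_le.trans_lt hμ1
    exact_mod_cast h0
  -- resolvent set
  have hres : ∀ t : ℝ, (μnn : ℝ) ≤ t →
      IsUnit (t • (1 : Bop (volume.restrict Ω)) - A m) := by
    intro t htt
    have htpos : 0 < t := hμpos.trans_le htt
    rw [← Algebra.algebraMap_eq_smul_one]
    apply spectrum.notMem_iff.mp
    intro hmem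
    have h1 : (‖t‖₊ : ℝ≥0∞) ≤ spectralRadius ℝ (A m) := by
      rw [spectralRadius]
      exact le_iSup₂ (f := fun (k : ℝ) (_ : k ∈ spectrum ℝ (A m)) => (‖k‖₊ : ℝ≥0∞)) t hmem
    have h2 : (μnn : ℝ≥0∞) ≤ (‖t‖₊ : ℝ≥0∞) := by
      rw [ENNReal.coe_le_coe, ← NNReal.coe_le_coe, coe_nnnorm, Real.norm_eq_abs,
        abs_of_pos htpos]
      exact htt
    exact absurd (h2.trans h1) (not_le.mpr hμ1)
  have hunit : IsUnit ((μnn : ℝ) • (1 : Bop (volume.restrict Ω)) - A m) :=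
    hres _ le_rfl
  have hRpos := pos_resolvent (A m) hPosm (μnn : ℝ) hμpos hres
  set R : Bop (volume.restrict Ω) :=
    Ring.inverse ((μnn : ℝ) • (1 : Bop (volume.restrict Ω)) - A m) with hRdef
  -- norm bounds
  have hnormb : ∀ n : ℕ, ‖(A l) ^ n‖ ≤ (μnn : ℝ) ^ (n + 1) * ‖R‖ := by
    intro n
    have h1 : ‖(A l) ^ n‖ ≤ ‖(A m) ^ n‖ :=
      Pos.norm_le (hPosl.pow n) (pow_compare hPosl hPosm hPosDiff n)
    have h2 : ‖(A m) ^ n‖ ≤ ‖(μnn : ℝ) ^ (n + 1) • R‖ :=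
      Pos.norm_le (hPosm.pow n) (pow_bound (A m) hPosm (μnn : ℝ) hμpos hunit hRpos n)
    have h3 : ‖(μnn : ℝ) ^ (n + 1) • R‖ ≤ (μnn : ℝ) ^ (n + 1) * ‖R‖ := by
      refine (norm_smul_le ((μnn : ℝ) ^ (n + 1)) R).trans ?_
      rw [Real.norm_of_nonneg (by positivity)]
    linarith
  -- pick w between μnn and spr (A l)
  obtain ⟨w, hw1, hw2⟩ := ENNReal.lt_iff_exists_nnreal_btwn.mp hμ2
  have hwpos : 0 < (w : ℝ) := hμpos.trans (by exact_mod_cast hw1)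
  have hμw : (μnn : ℝ) < (w : ℝ) := by exact_mod_cast hw1
  -- pick n
  have hratio : (μnn : ℝ) / (w : ℝ) < 1 := (div_lt_one hwpos).mpr hμw
  obtain ⟨n, hn⟩ := exists_pow_lt_of_lt_one
    (show (0:ℝ) < 1 / ((μnn : ℝ) * ‖R‖ + 1) by positivity) hratio
  -- real bound: ‖(A l)^(n+1)‖ ≤ w^(n+1)
  have hkey : ‖(A l) ^ (n + 1)‖ ≤ (w : ℝ) ^ (n + 1) := by
    have h1 := hnormb (n + 1)
    have h2 : ((μnn : ℝ) / (w : ℝ)) ^ (n + 1) ≤ ((μnn : ℝ) / (w : ℝ)) ^ n :=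
      pow_le_pow_of_le_one (by positivity) hratio.le (Nat.le_succ n)
    have h3 : (0:ℝ) < (μnn : ℝ) * ‖R‖ + 1 := by positivity
    have h4 : ((μnn : ℝ)) ^ (n + 2) * ‖R‖ ≤ (w : ℝ) ^ (n + 1) := by
      have h5 : ((μnn : ℝ) / (w : ℝ)) ^ (n + 1) * ((μnn : ℝ) * ‖R‖ + 1) ≤ 1 := by
        have := h2.trans hn.le
        calc ((μnn : ℝ) / (w : ℝ)) ^ (n + 1) * ((μnn : ℝ) * ‖R‖ + 1)
            ≤ 1 / ((μnn : ℝ) * ‖R‖ + 1) * ((μnn : ℝ) * ‖R‖ + 1) := by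
              apply mul_le_mul_of_nonneg_right this h3.le
          _ = 1 := by field_simp
      have h6 : ((μnn : ℝ)) ^ (n + 2) * ‖R‖
          = ((μnn : ℝ) / (w : ℝ)) ^ (n + 1) * ((μnn : ℝ) * ‖R‖) * (w : ℝ) ^ (n + 1) := by
        rw [div_pow, div_mul_eq_mul_div, div_mul_cancel₀ _ (pow_ne_zero _ hwpos.ne')]
        ring
      rw [h6]
      have h7 : ((μnn : ℝ) / (w : ℝ)) ^ (n + 1) * ((μnn : ℝ) * ‖R‖) ≤ 1 := by
        nlinarith [pow_nonneg (div_nonneg hμpos.le hwpos.le) (n + 1)]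
      nlinarith [pow_pos hwpos (n + 1)]
    calc ‖(A l) ^ (n + 1)‖ ≤ (μnn : ℝ) ^ (n + 1 + 1) * ‖R‖ := h1
      _ ≤ (w : ℝ) ^ (n + 1) := h4
  -- spectral radius bound
  have hspr := spectrum.spectralRadius_le_pow_nnnorm_pow_one_div ℝ (A l) n
  rw [nnnorm_one, ENNReal.coe_one, ENNReal.one_rpow, mul_one] at hspr
  have h9 : ‖(A l) ^ (n + 1)‖₊ ≤ w ^ (n + 1) := by
    rw [← NNReal.coe_le_coe]
    push_cast
    exact hkey
  have h8 : (‖(A l) ^ (n + 1)‖₊ : ℝ≥0∞) ^ (1 / ((n : ℝ) + 1)) ≤ (w : ℝ≥0∞) := by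
    have h10 : (‖(A l) ^ (n + 1)‖₊ : ℝ≥0∞) ^ (1 / ((n : ℝ) + 1))
        ≤ (↑(w ^ (n + 1)) : ℝ≥0∞) ^ (1 / ((n : ℝ) + 1)) :=
      ENNReal.rpow_le_rpow (ENNReal.coe_le_coe.2 h9) (by positivity)
    refine h10.trans_eq ?_
    rw [ENNReal.coe_pow, ← ENNReal.rpow_natCast ((w : ℝ≥0∞)) (n + 1), ← ENNReal.rpow_mul,
      show ((n + 1 : ℕ) : ℝ) * (1 / ((n : ℝ) + 1)) = 1 by push_cast; field_simp,
      ENNReal.rpow_one]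
  exact absurd (hspr.trans h8) (not_le.mpr hw2)
end

section
/- The function λ ↦ spr(A_λ) is continuous on the interval (−inf a, ∞). -/
open MeasureTheory ENNReal Set

set_option maxHeartbeats 1000000
set_option synthInstance.maxHeartbeats 1000000

namespace SprContAux

variable {X : Type*} [NormedAddCommGroup X] [Lattice X] [HasSolidNorm X] [IsOrderedAddMonoid X] [NormedSpace ℝ X] [CompleteSpace X]

/-- Positivity of a continuous linear operator. -/
def IsPos (T : X →L[ℝ] X) : Prop := ∀ u : X, 0 ≤ u → 0 ≤ T u

lemma IsPos.mono {T : X →L[ℝ] X} (hT : IsPos T) {u v : X} (huv : u ≤ v) : T u ≤ T v := by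
  have h := hT (v - u) (sub_nonneg.mpr huv)
  rw [map_sub] at h
  exact sub_nonneg.mp h

lemma IsPos.one : IsPos (1 : X →L[ℝ] X) := fun u hu => hu

lemma IsPos.mul {S T : X →L[ℝ] X} (hS : IsPos S) (hT : IsPos T) : IsPos (S * T) :=
  fun u hu => hS _ (hT u hu)

lemma IsPos.pow {T : X →L[ℝ] X} (hT : IsPos T) : ∀ n : ℕ, IsPos (T ^ n)
  | 0 => by simpa [pow_zero] using IsPos.one
  | n + 1 => by
      rw [pow_succ]
      exact (hT.pow n).mul hT

lemma IsPos.smul (hsm : ∀ (c : ℝ) (v : X), 0 ≤ c → 0 ≤ v → 0 ≤ c • v)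
    {T : X →L[ℝ] X} (hT : IsPos T) {c : ℝ} (hc : 0 ≤ c) : IsPos (c • T) := by
  intro u hu
  rw [ContinuousLinearMap.smul_apply]
  exact hsm c _ hc (hT u hu)

lemma isPos_of_tendsto {F : ℕ → X →L[ℝ] X} {T : X →L[ℝ] X}
    (hF : ∀ n, IsPos (F n)) (h : Filter.Tendsto F Filter.atTop (nhds T)) : IsPos T := by
  intro u hu
  have happ : Filter.Tendsto (fun n => F n u) Filter.atTop (nhds (T u)) :=
    ((ContinuousLinearMap.apply ℝ X u).continuous.tendsto T).comp h
  exact le_of_tendsto_of_tendsto tendsto_const_nhds happ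
    (Filter.Eventually.of_forall fun n => hF n u hu)

lemma isPos_sum {F : ℕ → X →L[ℝ] X} (hF : ∀ n, IsPos (F n)) (s : Finset ℕ) :
    IsPos (∑ i ∈ s, F i) := by
  intro u hu
  rw [ContinuousLinearMap.sum_apply]
  exact Finset.sum_nonneg fun i _ => hF i u hu

lemma isPos_tsum {F : ℕ → X →L[ℝ] X} (hF : ∀ n, IsPos (F n)) (hs : Summable F) :
    IsPos (∑' n, F n) := by
  refine isPos_of_tendsto (fun n => isPos_sum hF (Finset.range n)) ?_
  exact hs.hasSum.tendsto_sum_nat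

lemma IsPos.abs_apply_le {T : X →L[ℝ] X} (hT : IsPos T) (u : X) : |T u| ≤ T |u| := by
  refine abs_le'.mpr ⟨hT.mono (le_abs_self u), ?_⟩
  have h := hT.mono (neg_le.mpr (neg_le_abs u))
  rw [map_neg] at h
  exact neg_le.mpr h

lemma IsPos.norm_apply_le {T : X →L[ℝ] X} (hT : IsPos T) (u : X) : ‖T u‖ ≤ ‖T |u|‖ := by
  exact HasSolidNorm.solid ((hT.abs_apply_le u).trans (le_abs_self _))

lemma opNorm_le_of_dom {S T : X →L[ℝ] X} (hS : IsPos S) (hT : IsPos T)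
    (h : ∀ u, 0 ≤ u → S u ≤ T u) : ‖S‖ ≤ ‖T‖ := by
  refine ContinuousLinearMap.opNorm_le_bound _ (norm_nonneg T) fun u => ?_
  calc ‖S u‖ ≤ ‖S |u|‖ := hS.norm_apply_le u
    _ ≤ ‖T |u|‖ := by
        refine HasSolidNorm.solid ?_
        rw [abs_of_nonneg (hS _ (abs_nonneg u)), abs_of_nonneg (hT _ (abs_nonneg u))]
        exact h _ (abs_nonneg u)
    _ ≤ ‖T‖ * ‖|u|‖ := T.le_opNorm _
    _ = ‖T‖ * ‖u‖ := by rw [norm_abs_eq_norm]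

lemma dom_pow {S T : X →L[ℝ] X} (hS : IsPos S) (hT : IsPos T)
    (h : ∀ u, 0 ≤ u → S u ≤ T u) :
    ∀ n, ∀ u, 0 ≤ u → (S ^ n) u ≤ (T ^ n) u := by
  intro n
  induction n with
  | zero => intro u hu; simp
  | succ n ih =>
      intro u hu
      rw [pow_succ', pow_succ']
      calc (S * S ^ n) u = S ((S ^ n) u) := rfl
        _ ≤ S ((T ^ n) u) := hS.mono (ih u hu)
        _ ≤ T ((T ^ n) u) := h _ ((hT.pow n) u hu)
        _ = (T * T ^ n) u := rfl

/-- The norm-infimum quantity (Gelfand-type). -/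
noncomputable def rad (T : X →L[ℝ] X) : ℝ≥0∞ :=
  ⨅ n : ℕ, (‖T ^ (n + 1)‖₊ : ℝ≥0∞) ^ (1 / (n + 1) : ℝ)

lemma rad_le_nnnorm (T : X →L[ℝ] X) : rad T ≤ (‖T‖₊ : ℝ≥0∞) := by
  refine (iInf_le _ 0).trans_eq ?_
  norm_num

lemma rad_ne_top (T : X →L[ℝ] X) : rad T ≠ ∞ :=
  ne_top_of_le_ne_top ENNReal.coe_ne_top (rad_le_nnnorm T)

lemma spr_le_rad (T : X →L[ℝ] X) : spectralRadius ℝ T ≤ rad T := by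
  refine le_iInf fun n => ?_
  refine (spectrum.spectralRadius_le_pow_nnnorm_pow_one_div ℝ T n).trans ?_
  have h1 : (‖(1 : X →L[ℝ] X)‖₊ : ℝ≥0∞) ≤ 1 := by
    exact_mod_cast ContinuousLinearMap.norm_id_le
  calc (‖T ^ (n + 1)‖₊ : ℝ≥0∞) ^ (1 / (n + 1) : ℝ) * (‖(1 : X →L[ℝ] X)‖₊ : ℝ≥0∞) ^ (1 / (n + 1) : ℝ)
      ≤ (‖T ^ (n + 1)‖₊ : ℝ≥0∞) ^ (1 / (n + 1) : ℝ) * 1 ^ (1 / (n + 1) : ℝ) := by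
        gcongr
    _ = (‖T ^ (n + 1)‖₊ : ℝ≥0∞) ^ (1 / (n + 1) : ℝ) := by simp

lemma rad_mono {S T : X →L[ℝ] X} (hS : IsPos S) (hT : IsPos T)
    (h : ∀ u, 0 ≤ u → S u ≤ T u) : rad S ≤ rad T := by
  refine le_iInf fun n => (iInf_le _ n).trans ?_
  have hnorm : ‖S ^ (n + 1)‖₊ ≤ ‖T ^ (n + 1)‖₊ :=
    opNorm_le_of_dom (hS.pow _) (hT.pow _) (dom_pow hS hT h _)
  exact ENNReal.rpow_le_rpow (by exact_mod_cast hnorm) (by positivity)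


lemma le_ofReal_of_forall {x : ℝ≥0∞} (hx : x ≠ ∞) {μ : ℝ} (hμ : 0 ≤ μ)
    (h : ∀ b : ℝ, μ < b → x ≤ ENNReal.ofReal b) : x ≤ ENNReal.ofReal μ := by
  have h1 : x.toReal ≤ μ := by
    by_contra hcon
    push_neg at hcon
    obtain ⟨b, hb1, hb2⟩ := exists_between hcon
    have h3 := ENNReal.toReal_mono ENNReal.ofReal_ne_top (h b hb1)
    rw [ENNReal.toReal_ofReal (hμ.trans hb1.le)] at h3
    exact absurd h3 (not_le.mpr hb2)
  calc x = ENNReal.ofReal x.toReal := (ENNReal.ofReal_toReal hx).symm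
    _ ≤ ENNReal.ofReal μ := ENNReal.ofReal_le_ofReal h1

lemma spectrum_unit [Nontrivial X] {T : X →L[ℝ] X} {ν : ℝ}
    (h : (spectralRadius ℝ T).toReal < ν) :
    IsUnit (algebraMap ℝ (X →L[ℝ] X) ν - T) := by
  rw [← spectrum.notMem_iff]
  intro hν
  have hle : (‖ν‖₊ : ℝ≥0∞) ≤ spectralRadius ℝ T :=
    le_iSup₂ (f := fun k (_ : k ∈ spectrum ℝ T) => (‖k‖₊ : ℝ≥0∞)) ν hν
  have hfin : spectralRadius ℝ T ≠ ∞ :=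
    ne_top_of_le_ne_top ENNReal.coe_ne_top (spectrum.spectralRadius_le_nnnorm (𝕜 := ℝ) T)
  have h2 := ENNReal.toReal_mono hfin hle
  rw [ENNReal.coe_toReal] at h2
  have h3 : ν ≤ (‖ν‖₊ : ℝ) := by
    rw [coe_nnnorm, Real.norm_eq_abs]
    exact le_abs_self ν
  linarith

theorem rad_le_spr [Nontrivial X]
    (hsm : ∀ (c : ℝ) (v : X), 0 ≤ c → 0 ≤ v → 0 ≤ c • v)
    {T : X →L[ℝ] X} (hT : IsPos T) : rad T ≤ spectralRadius ℝ T := by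
  set s := (spectralRadius ℝ T).toReal with hs
  have hsnn : 0 ≤ s := ENNReal.toReal_nonneg
  have hsfin : spectralRadius ℝ T ≠ ∞ :=
    ne_top_of_le_ne_top ENNReal.coe_ne_top (spectrum.spectralRadius_le_nnnorm (𝕜 := ℝ) T)
  suffices hkey : ∀ μ : ℝ, s < μ → rad T ≤ ENNReal.ofReal μ by
    calc rad T ≤ ENNReal.ofReal s := le_ofReal_of_forall (rad_ne_top T) hsnn hkey
      _ = spectralRadius ℝ T := ENNReal.ofReal_toReal hsfin
  intro μ hμ
  have hμpos : 0 < μ := lt_of_le_of_lt hsnn hμ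
  have hunit : ∀ ν : ℝ, μ ≤ ν → IsUnit (algebraMap ℝ (X →L[ℝ] X) ν - T) := fun ν hν =>
    spectrum_unit (lt_of_lt_of_le hμ hν)
  set R : ℝ → (X →L[ℝ] X) := fun ν => Ring.inverse (algebraMap ℝ (X →L[ℝ] X) ν - T) with hRdef
  have hRmul : ∀ ν : ℝ, μ ≤ ν → (algebraMap ℝ (X →L[ℝ] X) ν - T) * R ν = 1 := fun ν hν =>
    Ring.mul_inverse_cancel _ (hunit ν hν)
  have hRmul' : ∀ ν : ℝ, μ ≤ ν → R ν * (algebraMap ℝ (X →L[ℝ] X) ν - T) = 1 := fun ν hν =>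
    Ring.inverse_mul_cancel _ (hunit ν hν)
  have huniq : ∀ (ν : ℝ), μ ≤ ν → ∀ y : (X →L[ℝ] X),
      (algebraMap ℝ (X →L[ℝ] X) ν - T) * y = 1 → R ν = y := by
    intro ν hν y hy
    calc R ν = R ν * ((algebraMap ℝ (X →L[ℝ] X) ν - T) * y) := by rw [hy, mul_one]
      _ = (R ν * (algebraMap ℝ (X →L[ℝ] X) ν - T)) * y := by rw [mul_assoc]
      _ = y := by rw [hRmul' ν hν, one_mul]
  set M : ℝ := max μ (‖T‖ + 1) with hM
  have hμM : μ ≤ M := le_max_left _ _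
  have hTM : ‖T‖ < M := lt_of_lt_of_le (lt_add_one _) (le_max_right _ _)
  have hMpos : 0 < M := lt_of_lt_of_le hμpos hμM
  have hcont : ContinuousOn R (Icc μ M) := by
    intro ν hν
    have hg : Continuous (fun ν : ℝ => algebraMap ℝ (X →L[ℝ] X) ν - T) := by
      simp only [Algebra.algebraMap_eq_smul_one]
      exact (continuous_id.smul continuous_const).sub continuous_const
    have h1 : ContinuousAt Ring.inverse (algebraMap ℝ (X →L[ℝ] X) ν - T) := by
      have h2 := NormedRing.inverse_continuousAt (hunit ν hν.1).unit
      rwa [IsUnit.unit_spec] at h2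
    have h2 : ContinuousAt (Ring.inverse ∘ fun ν : ℝ => algebraMap ℝ (X →L[ℝ] X) ν - T) ν :=
      ContinuousAt.comp h1 hg.continuousAt
    exact h2.continuousWithinAt
  obtain ⟨C, hC⟩ := (isCompact_Icc : IsCompact (Icc μ M)).exists_bound_of_continuousOn hcont
  have hC0 : 0 ≤ C := le_trans (norm_nonneg _) (hC M ⟨hμM, le_rfl⟩)
  set δ : ℝ := 1 / (2 * (C + 1)) with hδ
  have hδpos : 0 < δ := by positivity
  have hδC : δ * C < 1 := by
    rw [hδ, div_mul_eq_mul_div, one_mul, div_lt_one (by positivity)]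
    nlinarith
  have geom : ∀ w : X →L[ℝ] X, IsPos w → ‖w‖ < 1 →
      IsPos (∑' n : ℕ, w ^ n) ∧ ((1 : X →L[ℝ] X) - w) * (∑' n : ℕ, w ^ n) = 1 := by
    intro w hw hnw
    exact ⟨isPos_tsum (fun n => hw.pow n) (summable_geometric_of_norm_lt_one hnw),
      mul_neg_geom_series w hnw⟩
  have hposM : IsPos (R M) := by
    set z : X →L[ℝ] X := M⁻¹ • T with hz
    have hznorm : ‖z‖ < 1 := by
      refine lt_of_le_of_lt (ContinuousLinearMap.opNorm_smul_le M⁻¹ T) ?_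
      rw [norm_inv, Real.norm_of_nonneg hMpos.le]
      calc M⁻¹ * ‖T‖ < M⁻¹ * M := mul_lt_mul_of_pos_left hTM (inv_pos.mpr hMpos)
        _ = 1 := inv_mul_cancel₀ hMpos.ne'
    have hzpos : IsPos z := IsPos.smul hsm hT (inv_nonneg.mpr hMpos.le)
    obtain ⟨hpos1, hmul1⟩ := geom z hzpos hznorm
    have hfact : algebraMap ℝ (X →L[ℝ] X) M - T = M • ((1 : X →L[ℝ] X) - z) := by
      rw [smul_sub, hz, smul_smul, mul_inv_cancel₀ hMpos.ne', one_smul,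
        Algebra.algebraMap_eq_smul_one]
    have hkey1 : (algebraMap ℝ (X →L[ℝ] X) M - T) * (M⁻¹ • (∑' n : ℕ, z ^ n)) = 1 := by
      rw [hfact, smul_mul_assoc, mul_smul_comm, smul_smul, mul_inv_cancel₀ hMpos.ne',
        one_smul, hmul1]
    have h2 := huniq M hμM _ hkey1
    rw [h2]
    exact IsPos.smul hsm hpos1 (inv_nonneg.mpr hMpos.le)
  have hstep : ∀ ν₀ ν : ℝ, ν₀ ∈ Icc μ M → ν ∈ Icc μ M → IsPos (R ν₀) →
      ν₀ - δ ≤ ν → ν ≤ ν₀ → IsPos (R ν) := by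
    intro ν₀ ν hν₀ hν hpos₀ h1 h2
    set w : X →L[ℝ] X := (ν₀ - ν) • R ν₀ with hw
    have hwnorm : ‖w‖ < 1 := by
      refine lt_of_le_of_lt (ContinuousLinearMap.opNorm_smul_le (ν₀ - ν) (R ν₀)) ?_
      rw [Real.norm_of_nonneg (by linarith)]
      calc (ν₀ - ν) * ‖R ν₀‖ ≤ δ * C :=
          mul_le_mul (by linarith) (hC ν₀ hν₀) (norm_nonneg _) hδpos.le
        _ < 1 := hδC
    have hwpos : IsPos w := IsPos.smul hsm hpos₀ (by linarith)
    obtain ⟨hpos1, hmul1⟩ := geom w hwpos hwnorm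
    have hfact : algebraMap ℝ (X →L[ℝ] X) ν - T
        = (algebraMap ℝ (X →L[ℝ] X) ν₀ - T) * ((1 : X →L[ℝ] X) - w) := by
      rw [mul_sub, mul_one, hw, mul_smul_comm, hRmul ν₀ hν₀.1]
      simp only [Algebra.algebraMap_eq_smul_one, sub_smul, smul_eq_mul]
      abel
    have hkey1 : (algebraMap ℝ (X →L[ℝ] X) ν - T) * ((∑' n : ℕ, w ^ n) * R ν₀) = 1 := by
      rw [hfact, mul_assoc, ← mul_assoc ((1 : X →L[ℝ] X) - w), hmul1, one_mul]
      exact hRmul ν₀ hν₀.1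
    have h3 := huniq ν hν.1 _ hkey1
    rw [h3]
    exact fun u hu => hpos1 _ (hpos₀ u hu)
  have hdescent : ∀ j : ℕ, ∀ ν, ν ∈ Icc μ M → M - (j : ℝ) * δ ≤ ν → IsPos (R ν) := by
    intro j
    induction j with
    | zero =>
        intro ν hν h
        have hνM : ν = M := le_antisymm hν.2 (by simpa using h)
        rwa [hνM]
    | succ j ih =>
        intro ν hν h
        set ν₀ : ℝ := min M (ν + δ) with hν₀def
        have hν₀mem : ν₀ ∈ Icc μ M :=
          ⟨le_min hμM (by linarith [hν.1]), min_le_left _ _⟩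
        have hν₀ge : M - (j : ℝ) * δ ≤ ν₀ := by
          rcases le_total M (ν + δ) with hc | hc
          · rw [hν₀def, min_eq_left hc]
            nlinarith [hδpos]
          · rw [hν₀def, min_eq_right hc]
            push_cast at h
            linarith
        refine hstep ν₀ ν hν₀mem hν (ih ν₀ hν₀mem hν₀ge) ?_ (le_min hν.2 (by linarith))
        have := min_le_right M (ν + δ)
        linarith [this]
  have hposμ : IsPos (R μ) := by
    obtain ⟨j, hj⟩ := exists_nat_ge ((M - μ) / δ)
    refine hdescent j μ ⟨le_rfl, hμM⟩ ?_
    rw [div_le_iff₀ hδpos] at hj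
    linarith
  have hfund : ∀ v : X, μ • (R μ) v = v + T ((R μ) v) := by
    intro v
    have h1 : ((algebraMap ℝ (X →L[ℝ] X) μ - T) * R μ) v = v := by
      rw [hRmul μ le_rfl]
      simp
    have h2 : ((algebraMap ℝ (X →L[ℝ] X) μ - T) * R μ) v = μ • (R μ) v - T ((R μ) v) := by
      simp [ContinuousLinearMap.mul_apply, Algebra.algebraMap_eq_smul_one]
    rw [h2] at h1
    exact sub_eq_iff_eq_add.mp h1
  have hsmono : ∀ (c : ℝ) {v w : X}, 0 ≤ c → v ≤ w → c • v ≤ c • w := by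
    intro c v w hc hvw
    have h1 := hsm c (w - v) hc (sub_nonneg.mpr hvw)
    rw [smul_sub] at h1
    exact sub_nonneg.mp h1
  have hkey2 : ∀ k : ℕ, ∀ u : X, 0 ≤ u → (T ^ k) u ≤ (μ ^ (k + 1)) • (R μ) u := by
    intro k
    induction k with
    | zero =>
        intro u hu
        calc (T ^ 0) u = u := by simp
          _ ≤ u + T ((R μ) u) := le_add_of_nonneg_right (hT _ (hposμ u hu))
          _ = μ • (R μ) u := (hfund u).symm
          _ = (μ ^ (0 + 1)) • (R μ) u := by rw [pow_one]
    | succ k ih =>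
        intro u hu
        have h1 : (T ^ (k + 1)) u = T ((T ^ k) u) := by
          rw [pow_succ']
          rfl
        calc (T ^ (k + 1)) u = T ((T ^ k) u) := h1
          _ ≤ T ((μ ^ (k + 1)) • (R μ) u) := hT.mono (ih u hu)
          _ = (μ ^ (k + 1)) • T ((R μ) u) := by rw [ContinuousLinearMap.map_smul]
          _ ≤ (μ ^ (k + 1)) • (u + T ((R μ) u)) :=
              hsmono _ (by positivity) (le_add_of_nonneg_left hu)
          _ = (μ ^ (k + 1)) • (μ • (R μ) u) := by rw [hfund u]
          _ = (μ ^ (k + 1 + 1)) • (R μ) u := by rw [smul_smul, ← pow_succ]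
  have hnormk : ∀ k : ℕ, ‖T ^ k‖ ≤ μ ^ (k + 1) * ‖R μ‖ := by
    intro k
    refine ContinuousLinearMap.opNorm_le_bound _ (by positivity) fun u => ?_
    calc ‖(T ^ k) u‖ ≤ ‖(T ^ k) |u|‖ := (hT.pow k).norm_apply_le u
      _ ≤ ‖(μ ^ (k + 1)) • (R μ) |u|‖ := by
          refine HasSolidNorm.solid ?_
          rw [abs_of_nonneg ((hT.pow k) _ (abs_nonneg u)),
            abs_of_nonneg (hsm _ _ (by positivity) (hposμ _ (abs_nonneg u)))]
          exact hkey2 k _ (abs_nonneg u)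
      _ = μ ^ (k + 1) * ‖(R μ) |u|‖ := by
          rw [norm_smul, Real.norm_of_nonneg (by positivity)]
      _ ≤ μ ^ (k + 1) * (‖R μ‖ * ‖|u|‖) := by
          have h2 := (R μ).le_opNorm |u|
          have h3 : (0:ℝ) ≤ μ ^ (k + 1) := by positivity
          nlinarith
      _ = μ ^ (k + 1) * ‖R μ‖ * ‖u‖ := by rw [norm_abs_eq_norm]; ring
  refine le_ofReal_of_forall (rad_ne_top T) hμpos.le ?_
  intro b hbμ
  have hbpos : 0 < b := hμpos.trans hbμ
  obtain ⟨n, hn⟩ := exists_pow_lt_of_lt_one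
    (show (0:ℝ) < 1 / (μ * (‖R μ‖ + 1)) by positivity)
    (show μ / b < 1 by rw [div_lt_one hbpos]; exact hbμ)
  have hratio0 : (0:ℝ) ≤ μ / b := by positivity
  have h1 : (μ / b) ^ (n + 1) ≤ (μ / b) ^ n :=
    pow_le_pow_of_le_one hratio0 (by rw [div_le_one hbpos]; exact hbμ.le) (Nat.le_succ n)
  have h2 : μ ^ (n + 2) * (‖R μ‖ + 1) ≤ b ^ (n + 1) := by
    have h3 : (μ / b) ^ (n + 1) * (μ * (‖R μ‖ + 1)) ≤ 1 := by
      have h4 := mul_le_mul_of_nonneg_right (h1.trans hn.le)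
        (show (0:ℝ) ≤ μ * (‖R μ‖ + 1) by positivity)
      rwa [one_div, inv_mul_cancel₀ (by positivity)] at h4
    rw [div_pow, div_mul_eq_mul_div, div_le_one (by positivity)] at h3
    calc μ ^ (n + 2) * (‖R μ‖ + 1) = μ ^ (n + 1) * (μ * (‖R μ‖ + 1)) := by ring
      _ ≤ b ^ (n + 1) := h3
  have h4 : ‖T ^ (n + 1)‖ ≤ b ^ (n + 1) := by
    calc ‖T ^ (n + 1)‖ ≤ μ ^ (n + 1 + 1) * ‖R μ‖ := hnormk (n + 1)
      _ ≤ μ ^ (n + 2) * (‖R μ‖ + 1) := by nlinarith [pow_pos hμpos (n + 2)]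
      _ ≤ b ^ (n + 1) := h2
  have h5 : (‖T ^ (n + 1)‖₊ : ℝ≥0∞) ≤ (ENNReal.ofReal b) ^ (n + 1) := by
    rw [← ENNReal.ofReal_pow hbpos.le, ← enorm_eq_nnnorm, ← ofReal_norm]
    exact ENNReal.ofReal_le_ofReal h4
  calc rad T ≤ (‖T ^ (n + 1)‖₊ : ℝ≥0∞) ^ (1 / (n + 1) : ℝ) := iInf_le _ n
    _ ≤ ((ENNReal.ofReal b) ^ (n + 1)) ^ (1 / (n + 1) : ℝ) :=
        ENNReal.rpow_le_rpow h5 (by positivity)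
    _ = ENNReal.ofReal b := by
        rw [← ENNReal.rpow_natCast (ENNReal.ofReal b) (n + 1), ← ENNReal.rpow_mul]
        norm_num
        rw [mul_inv_cancel₀ (by positivity : ((n:ℝ) + 1) ≠ 0), ENNReal.rpow_one]

theorem spr_eq_rad [Nontrivial X]
    (hsm : ∀ (c : ℝ) (v : X), 0 ≤ c → 0 ≤ v → 0 ≤ c • v)
    {T : X →L[ℝ] X} (hT : IsPos T) : spectralRadius ℝ T = rad T :=
  le_antisymm (spr_le_rad T) (rad_le_spr hsm hT)


lemma ofReal_mul_rad_le {κ : ℝ} (hκ : 0 ≤ κ) (T : X →L[ℝ] X) :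
    ENNReal.ofReal κ * rad T ≤ rad (κ • T) := by
  refine le_iInf fun n => ?_
  have h1 : ‖(κ • T) ^ (n + 1)‖₊ = ‖κ‖₊ ^ (n + 1) * ‖T ^ (n + 1)‖₊ := by
    rw [smul_pow κ T (n + 1)]
    have h2 : ‖κ ^ (n + 1) • T ^ (n + 1)‖₊ = ‖κ ^ (n + 1)‖₊ * ‖T ^ (n + 1)‖₊ :=
      nnnorm_smul (κ ^ (n + 1)) (T ^ (n + 1))
    rw [h2, nnnorm_pow]
  have h3 : ((‖(κ • T) ^ (n + 1)‖₊ : ℝ≥0∞)) ^ (1 / (n + 1) : ℝ)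
      = ENNReal.ofReal κ * (‖T ^ (n + 1)‖₊ : ℝ≥0∞) ^ (1 / (n + 1) : ℝ) := by
    rw [h1, ENNReal.coe_mul,
      ENNReal.mul_rpow_of_ne_top ENNReal.coe_ne_top ENNReal.coe_ne_top, ENNReal.coe_pow,
      ← ENNReal.rpow_natCast ((‖κ‖₊ : ℝ≥0∞)) (n + 1), ← ENNReal.rpow_mul]
    norm_num
    rw [mul_inv_cancel₀ (by positivity : ((n:ℝ) + 1) ≠ 0), ENNReal.rpow_one,
      ← enorm_eq_nnnorm κ, Real.enorm_eq_ofReal hκ]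
  calc ENNReal.ofReal κ * rad T
      ≤ ENNReal.ofReal κ * (‖T ^ (n + 1)‖₊ : ℝ≥0∞) ^ (1 / (n + 1) : ℝ) := by
        gcongr
        exact iInf_le _ n
    _ = ((‖(κ • T) ^ (n + 1)‖₊ : ℝ≥0∞)) ^ (1 / (n + 1) : ℝ) := h3.symm

lemma continuousOn_of_squeeze {m : ℝ} {f : ℝ → ℝ}
    (h0 : ∀ l, -m < l → 0 ≤ f l)
    (hanti : ∀ l l', -m < l → l ≤ l' → f l' ≤ f l)
    (hlow : ∀ l l', -m < l → l ≤ l' → (l + m) / (l' + m) * f l ≤ f l') :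
    ContinuousOn f (Ioi (-m)) := by
  intro l₀ hl₀
  rw [mem_Ioi] at hl₀
  have hl₀m : 0 < l₀ + m := by linarith
  rw [Metric.continuousWithinAt_iff]
  intro ε hε
  have hf0 := h0 l₀ hl₀
  refine ⟨min ((l₀ + m) / 2) (ε * (l₀ + m) / (2 * (2 * f l₀ + 1))), by positivity, ?_⟩
  intro l hl hdist
  rw [mem_Ioi] at hl
  rw [Real.dist_eq] at hdist ⊢
  have hd1 : |l - l₀| < (l₀ + m) / 2 := lt_of_lt_of_le hdist (min_le_left _ _)
  have hd2 : |l - l₀| < ε * (l₀ + m) / (2 * (2 * f l₀ + 1)) :=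
    lt_of_lt_of_le hdist (min_le_right _ _)
  have habs := abs_lt.mp hd1
  have key : |f l - f l₀| ≤ f l₀ * |l - l₀| * 2 / (l₀ + m) := by
    rcases le_total l l₀ with hc | hc
    · have hup : f l₀ ≤ f l := hanti l l₀ hl hc
      have hlo := hlow l l₀ hl hc
      have hlm : 0 < l + m := by linarith [habs.1]
      have h2 : f l ≤ (l₀ + m) / (l + m) * f l₀ := by
        rw [div_mul_eq_mul_div, le_div_iff₀ hlm]
        rw [div_mul_eq_mul_div, div_le_iff₀ hl₀m] at hlo
        nlinarith [hlo]
      rw [abs_of_nonneg (by linarith : 0 ≤ f l - f l₀),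
        abs_of_nonpos (by linarith : l - l₀ ≤ 0)]
      have heq : (l₀ + m) / (l + m) * f l₀ - f l₀ = (l₀ - l) / (l + m) * f l₀ := by
        field_simp
        ring
      have h3 : f l - f l₀ ≤ (l₀ - l) / (l + m) * f l₀ := by linarith [h2, heq]
      have h4 : (l₀ - l) / (l + m) ≤ (l₀ - l) * 2 / (l₀ + m) := by
        rw [div_le_div_iff₀ hlm hl₀m]
        nlinarith [habs.1, habs.2]
      calc f l - f l₀ ≤ (l₀ - l) / (l + m) * f l₀ := h3
        _ ≤ (l₀ - l) * 2 / (l₀ + m) * f l₀ := by nlinarith [h4, hf0]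
        _ = f l₀ * -(l - l₀) * 2 / (l₀ + m) := by ring
    · have hup : f l ≤ f l₀ := hanti l₀ l hl₀ hc
      have hlo := hlow l₀ l hl₀ hc
      have hlm : 0 < l + m := by linarith
      rw [abs_of_nonpos (by linarith : f l - f l₀ ≤ 0),
        abs_of_nonneg (by linarith : (0:ℝ) ≤ l - l₀)]
      have heq : f l₀ - (l₀ + m) / (l + m) * f l₀ = (l - l₀) / (l + m) * f l₀ := by
        field_simp
        ring
      have h3 : f l₀ - f l ≤ (l - l₀) / (l + m) * f l₀ := by
        have h5 : (l₀ + m) / (l + m) * f l₀ ≤ f l := hlo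
        linarith [heq, h5]
      have h4 : (l - l₀) / (l + m) ≤ (l - l₀) * 2 / (l₀ + m) := by
        rw [div_le_div_iff₀ hlm hl₀m]
        nlinarith
      calc -(f l - f l₀) = f l₀ - f l := by ring
        _ ≤ (l - l₀) / (l + m) * f l₀ := h3
        _ ≤ (l - l₀) * 2 / (l₀ + m) * f l₀ := by nlinarith [h4, hf0]
        _ = f l₀ * (l - l₀) * 2 / (l₀ + m) := by ring
  calc |f l - f l₀| ≤ f l₀ * |l - l₀| * 2 / (l₀ + m) := key
    _ < ε := by
      rw [div_lt_iff₀ hl₀m]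
      rw [lt_div_iff₀ (by positivity : (0:ℝ) < 2 * (2 * f l₀ + 1))] at hd2
      nlinarith [abs_nonneg (l - l₀), hf0, mul_nonneg (abs_nonneg (l - l₀)) hf0]

end SprContAux

/-- λ ↦ spr(A_λ) is continuous on the interval (−inf a, ∞). -/
theorem stmt_8
    (Ω : Set ℝ) (hΩ : MeasurableSet Ω)
    (a : ℝ → ℝ) (ha : Continuous a)
    (c c' : ℝ) (hc0 : 0 < c) (hcc' : c < c')
    (hbound : ∀ x ∈ Ω, c < a x ∧ a x < c')
    (J : ℝ → ℝ → ℝ) (hJmeas : Measurable (Function.uncurry J))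
    (hJnonneg : ∀ x y, 0 ≤ J x y)
    (𝒥 : Lp ℝ 1 (volume.restrict Ω) →L[ℝ] Lp ℝ 1 (volume.restrict Ω))
    (h𝒥 : ∀ u : Lp ℝ 1 (volume.restrict Ω),
      ⇑(𝒥 u) =ᵐ[volume.restrict Ω] fun x => ∫ y in Ω, J x y * u y)
    (A : ℝ → (Lp ℝ 1 (volume.restrict Ω) →L[ℝ] Lp ℝ 1 (volume.restrict Ω)))
    (hA : ∀ l : ℝ, -sInf (a '' Ω) < l → ∀ u : Lp ℝ 1 (volume.restrict Ω),
      ⇑(A l u) =ᵐ[volume.restrict Ω] fun x => (𝒥 u) x / (l + a x)) :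
    ContinuousOn (fun l : ℝ => spectralRadius ℝ (A l)) (Set.Ioi (-sInf (a '' Ω))) := by
  classical
  haveI : Fact ((1 : ℝ≥0∞) ≤ 1) := ⟨le_rfl⟩
  rcases subsingleton_or_nontrivial (Lp ℝ 1 (volume.restrict Ω)) with hsub | hnt
  · have hAeq : ∀ l : ℝ, A l = A 0 := fun l =>
      ContinuousLinearMap.ext fun u => Subsingleton.elim _ _
    have heq : (fun l : ℝ => spectralRadius ℝ (A l))
        = fun _ : ℝ => spectralRadius ℝ (A 0) := by
      funext l
      rw [hAeq l]
    rw [heq]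
    exact continuousOn_const
  · set m := sInf (a '' Ω) with hm
    have hbdd : BddBelow (a '' Ω) := ⟨c, by rintro y ⟨x, hx, rfl⟩; exact (hbound x hx).1.le⟩
    have hma : ∀ x ∈ Ω, m ≤ a x := fun x hx => csInf_le hbdd (mem_image_of_mem a hx)
    have haem : ∀ᵐ x ∂(volume.restrict Ω), m ≤ a x := by
      filter_upwards [ae_restrict_mem hΩ] with x hx using hma x hx
    have hsmLp : ∀ (r : ℝ) (v : Lp ℝ 1 (volume.restrict Ω)), 0 ≤ r → 0 ≤ v → 0 ≤ r • v := by
      intro r v hr hv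
      rw [← MeasureTheory.Lp.coeFn_nonneg] at hv ⊢
      filter_upwards [MeasureTheory.Lp.coeFn_smul r v, hv] with x h1 h2
      rw [h1]
      simp only [Pi.smul_apply, smul_eq_mul]
      exact mul_nonneg hr h2
    have hJpos : ∀ u : Lp ℝ 1 (volume.restrict Ω), 0 ≤ u →
        ∀ᵐ x ∂(volume.restrict Ω), 0 ≤ (𝒥 u) x := by
      intro u hu
      rw [← MeasureTheory.Lp.coeFn_nonneg] at hu
      filter_upwards [h𝒥 u] with x hx
      rw [hx]
      refine integral_nonneg_of_ae ?_
      filter_upwards [hu] with y hy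
      exact mul_nonneg (hJnonneg x y) hy
    have hpos : ∀ l : ℝ, -m < l → SprContAux.IsPos (A l) := by
      intro l hl u hu
      rw [← MeasureTheory.Lp.coeFn_nonneg]
      filter_upwards [hA l hl u, hJpos u hu, haem] with x h1 h2 h3
      rw [h1]
      exact div_nonneg h2 (by linarith)
    have hdom : ∀ l l' : ℝ, -m < l → l ≤ l' → ∀ u, 0 ≤ u → (A l') u ≤ (A l) u := by
      intro l l' hl hll' u hu
      rw [← MeasureTheory.Lp.coeFn_le]
      filter_upwards [hA l hl u, hA l' (lt_of_lt_of_le hl hll') u, hJpos u hu, haem]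
        with x h1 h2 h3 h4
      rw [h1, h2]
      gcongr <;> linarith
    have hdom2 : ∀ l l' : ℝ, -m < l → l ≤ l' → ∀ u, 0 ≤ u →
        (((l + m) / (l' + m)) • A l) u ≤ (A l') u := by
      intro l l' hl hll' u hu
      have hl' : -m < l' := lt_of_lt_of_le hl hll'
      rw [← MeasureTheory.Lp.coeFn_le]
      have h0 : (((l + m) / (l' + m)) • A l) u = ((l + m) / (l' + m)) • (A l u) := rfl
      rw [h0]
      filter_upwards [MeasureTheory.Lp.coeFn_smul ((l + m) / (l' + m)) (A l u),
        hA l hl u, hA l' hl' u, hJpos u hu, haem] with x hsx h1 h2 h3 h4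
      rw [hsx, h2]
      simp only [Pi.smul_apply, smul_eq_mul]
      rw [h1]
      have p1 : 0 < l + a x := by linarith
      have p2 : 0 < l' + a x := by linarith
      have p3 : 0 < l' + m := by linarith
      rw [div_mul_div_comm, div_le_div_iff₀ (by positivity) p2]
      nlinarith [mul_nonneg (mul_nonneg h3 (sub_nonneg.mpr hll')) (sub_nonneg.mpr h4)]
    have hspr : ∀ l : ℝ, l ∈ Ioi (-m) → spectralRadius ℝ (A l) = SprContAux.rad (A l) :=
      fun l hl => SprContAux.spr_eq_rad hsmLp (hpos l hl)
    set f : ℝ → ℝ := fun l => (SprContAux.rad (A l)).toReal with hfdef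
    have hanti : ∀ l l', -m < l → l ≤ l' → f l' ≤ f l := by
      intro l l' hl hll'
      exact ENNReal.toReal_mono (SprContAux.rad_ne_top _)
        (SprContAux.rad_mono (hpos l' (lt_of_lt_of_le hl hll')) (hpos l hl) (hdom l l' hl hll'))
    have hlow : ∀ l l', -m < l → l ≤ l' → (l + m) / (l' + m) * f l ≤ f l' := by
      intro l l' hl hll'
      have hl' : -m < l' := lt_of_lt_of_le hl hll'
      have hκ0 : 0 ≤ (l + m) / (l' + m) := by
        apply div_nonneg <;> linarith
      have h1 : ENNReal.ofReal ((l + m) / (l' + m)) * SprContAux.rad (A l)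
          ≤ SprContAux.rad (A l') := by
        calc ENNReal.ofReal ((l + m) / (l' + m)) * SprContAux.rad (A l)
            ≤ SprContAux.rad (((l + m) / (l' + m)) • A l) :=
              SprContAux.ofReal_mul_rad_le hκ0 _
          _ ≤ SprContAux.rad (A l') := SprContAux.rad_mono
              (SprContAux.IsPos.smul hsmLp (hpos l hl) hκ0) (hpos l' hl')
              (hdom2 l l' hl hll')
      have h2 := ENNReal.toReal_mono (SprContAux.rad_ne_top _) h1
      rw [ENNReal.toReal_mul, ENNReal.toReal_ofReal hκ0] at h2
      exact h2
    have hcont : ContinuousOn f (Ioi (-m)) :=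
      SprContAux.continuousOn_of_squeeze (fun l _ => ENNReal.toReal_nonneg) hanti hlow
    have hcont2 : ContinuousOn (fun l => ENNReal.ofReal (f l)) (Ioi (-m)) :=
      ENNReal.continuous_ofReal.comp_continuousOn hcont
    refine ContinuousOn.congr hcont2 ?_
    intro l hl
    show spectralRadius ℝ (A l) = ENNReal.ofReal (f l)
    rw [hspr l hl]
    exact (ENNReal.ofReal_toReal (SprContAux.rad_ne_top _)).symm
end

section
/- For λ > λ′ > −inf a, define c(λ, λ′) = sup_{x ∈ Ω} (λ + a(x))/(λ′ + a(x)). Then c(λ, λ′) > 1 and spr(A_{λ′}) ≤ c(λ, λ′) · spr(A_λ). -/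
open MeasureTheory ENNReal Set Filter

set_option synthInstance.maxHeartbeats 1000000
set_option maxHeartbeats 1000000

namespace Stmt9Aux

variable {E : Type*} [NormedAddCommGroup E] [Lattice E] [HasSolidNorm E] [IsOrderedAddMonoid E] [NormedSpace ℝ E]
/-- Positivity of a continuous linear operator. -/
def IsPosOp (T : E →L[ℝ] E) : Prop := ∀ u : E, 0 ≤ u → 0 ≤ T u

theorem IsPosOp.mono {T : E →L[ℝ] E} (hT : IsPosOp T) {u v : E} (h : u ≤ v) : T u ≤ T v := by
  have h2 := hT (v - u) (sub_nonneg.mpr h)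
  rw [map_sub] at h2
  exact sub_nonneg.mp h2

theorem isPosOp_one : IsPosOp (1 : E →L[ℝ] E) := fun u hu => by
  simpa [ContinuousLinearMap.one_apply] using hu

theorem IsPosOp.mul {S T : E →L[ℝ] E} (hS : IsPosOp S) (hT : IsPosOp T) : IsPosOp (S * T) :=
  fun u hu => hS _ (hT _ hu)

theorem IsPosOp.pow {T : E →L[ℝ] E} (hT : IsPosOp T) : ∀ n : ℕ, IsPosOp (T ^ n)
  | 0 => by rw [pow_zero]; exact isPosOp_one
  | n + 1 => by rw [pow_succ]; exact (hT.pow n).mul hT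

theorem IsPosOp.smul (hsm : ∀ (c : ℝ) (u : E), 0 ≤ c → 0 ≤ u → 0 ≤ c • u)
    {T : E →L[ℝ] E} (hT : IsPosOp T) {r : ℝ} (hr : 0 ≤ r) : IsPosOp (r • T) := by
  intro u hu
  rw [ContinuousLinearMap.smul_apply]
  exact hsm r (T u) hr (hT u hu)

theorem IsPosOp.abs_apply_le {T : E →L[ℝ] E} (hT : IsPosOp T) (u : E) : |T u| ≤ T |u| := by
  refine abs_le'.mpr ⟨hT.mono (le_abs_self u), ?_⟩
  rw [← map_neg]
  exact hT.mono (neg_le_abs u)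

theorem IsPosOp.norm_apply_le {T : E →L[ℝ] E} (hT : IsPosOp T) (u : E) : ‖T u‖ ≤ ‖T |u|‖ := by
  refine HasSolidNorm.solid ?_
  rw [abs_of_nonneg (hT _ (abs_nonneg u))]
  exact hT.abs_apply_le u

theorem dom_pow {S T : E →L[ℝ] E} (hS : IsPosOp S) (hT : IsPosOp T)
    (hd : ∀ u : E, 0 ≤ u → S u ≤ T u) :
    ∀ (n : ℕ) (u : E), 0 ≤ u → (S ^ n) u ≤ (T ^ n) u := by
  intro n
  induction n with
  | zero => intro u hu; simp [pow_zero]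
  | succ n ih =>
    intro u hu
    rw [pow_succ, pow_succ, ContinuousLinearMap.mul_apply, ContinuousLinearMap.mul_apply]
    exact le_trans (ih (S u) (hS u hu)) ((hT.pow n).mono (hd u hu))

theorem opNorm_le_of_dom {S T : E →L[ℝ] E} (hS : IsPosOp S) (hT : IsPosOp T)
    (hd : ∀ u : E, 0 ≤ u → S u ≤ T u) : ‖S‖ ≤ ‖T‖ := by
  refine ContinuousLinearMap.opNorm_le_bound _ (norm_nonneg T) fun u => ?_
  calc ‖S u‖ ≤ ‖S |u|‖ := hS.norm_apply_le u
    _ ≤ ‖T |u|‖ := by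
        refine HasSolidNorm.solid ?_
        rw [abs_of_nonneg (hS _ (abs_nonneg u)), abs_of_nonneg (hT _ (abs_nonneg u))]
        exact hd _ (abs_nonneg u)
    _ ≤ ‖T‖ * ‖|u|‖ := T.le_opNorm _
    _ = ‖T‖ * ‖u‖ := by rw [norm_abs_eq_norm]

theorem IsPosOp.tsum {F : ℕ → E →L[ℝ] E} (hs : Summable F) (h : ∀ n, IsPosOp (F n)) :
    IsPosOp (∑' n, F n) := by
  intro u hu
  have h2 : (∑' n, F n) u = ∑' n, (F n) u := by
    have h3 := (ContinuousLinearMap.apply ℝ E u).map_tsum hs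
    simpa [ContinuousLinearMap.apply_apply] using h3
  rw [h2]
  exact tsum_nonneg fun n => h n u hu

theorem rinv_eq {M₀ : Type*} [MonoidWithZero M₀] {x y : M₀} (h : IsUnit x) (hxy : x * y = 1) :
    Ring.inverse x = y := by
  calc Ring.inverse x = Ring.inverse x * (x * y) := by rw [hxy, mul_one]
    _ = (Ring.inverse x * x) * y := (mul_assoc _ _ _).symm
    _ = y := by rw [Ring.inverse_mul_cancel x h, one_mul]

section Growth

variable {E : Type*} [NormedAddCommGroup E] [Lattice E] [HasSolidNorm E] [IsOrderedAddMonoid E] [NormedSpace ℝ E] [CompleteSpace E]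

theorem unit_of_gt (B : E →L[ℝ] E) [Nontrivial E] {ν : ℝ}
    (hν : (spectralRadius ℝ B).toReal < ν) :
    IsUnit (algebraMap ℝ (E →L[ℝ] E) ν - B) := by
  by_contra hcon
  have hmem : ν ∈ spectrum ℝ B := spectrum.mem_iff.mpr hcon
  have h1 : (‖ν‖₊ : ℝ≥0∞) ≤ spectralRadius ℝ B := by
    unfold spectralRadius
    exact le_iSup₂ (f := fun k (_ : k ∈ spectrum ℝ B) => (‖k‖₊ : ℝ≥0∞)) ν hmem
  have hfin : spectralRadius ℝ B ≠ ⊤ :=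
    ne_top_of_le_ne_top ENNReal.coe_ne_top (spectrum.spectralRadius_le_nnnorm (𝕜 := ℝ) B)
  have h2 : ‖ν‖ ≤ (spectralRadius ℝ B).toReal := by
    have h3 := ENNReal.toReal_mono hfin h1
    simpa using h3
  rw [Real.norm_eq_abs] at h2
  have h4 : ν ≤ (spectralRadius ℝ B).toReal := le_trans (le_abs_self ν) h2
  linarith

theorem posR_big (hsm : ∀ (c : ℝ) (u : E), 0 ≤ c → 0 ≤ u → 0 ≤ c • u)
    (B : E →L[ℝ] E) (hB : IsPosOp B) {ν : ℝ} (hν : ‖B‖ < ν) :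
    IsPosOp (Ring.inverse (algebraMap ℝ (E →L[ℝ] E) ν - B)) := by
  have hν0 : 0 < ν := lt_of_le_of_lt (norm_nonneg B) hν
  set x : E →L[ℝ] E := ν⁻¹ • B with hxdef
  have hx : ‖x‖ < 1 := by
    rw [hxdef, norm_smul ν⁻¹ B, Real.norm_eq_abs, abs_of_pos (inv_pos.mpr hν0),
      ← div_eq_inv_mul]
    exact (div_lt_one hν0).mpr hν
  have hsumx : Summable (fun n : ℕ => x ^ n) := summable_geometric_of_norm_lt_one hx
  have key : algebraMap ℝ (E →L[ℝ] E) ν - B = algebraMap ℝ (E →L[ℝ] E) ν * (1 - x) := by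
    rw [hxdef, Algebra.algebraMap_eq_smul_one, smul_mul_assoc, one_mul, smul_sub, smul_smul,
      mul_inv_cancel₀ hν0.ne', one_smul]
  have hu : IsUnit (algebraMap ℝ (E →L[ℝ] E) ν - B) := by
    rw [key]
    exact ((isUnit_iff_ne_zero.mpr hν0.ne').map (algebraMap ℝ (E →L[ℝ] E))).mul
      (isUnit_one_sub_of_norm_lt_one hx)
  have hmain : (algebraMap ℝ (E →L[ℝ] E) ν - B) * (ν⁻¹ • ∑' n : ℕ, x ^ n) = 1 := by
    rw [key, mul_smul_comm, mul_assoc, mul_neg_geom_series x hx, mul_one,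
      Algebra.algebraMap_eq_smul_one, smul_smul, inv_mul_cancel₀ hν0.ne', one_smul]
  have hR2 : Ring.inverse (algebraMap ℝ (E →L[ℝ] E) ν - B) = ∑' n : ℕ, ν⁻¹ • x ^ n := by
    rw [rinv_eq hu hmain, ← Summable.tsum_const_smul _ hsumx]
  rw [hR2]
  refine IsPosOp.tsum (hsumx.const_smul _) fun n => ?_
  rw [hxdef, smul_pow]
  exact IsPosOp.smul hsm (IsPosOp.smul hsm (hB.pow n) (pow_nonneg (inv_pos.mpr hν0).le n))
    (inv_pos.mpr hν0).le

theorem growth_bound (hsm : ∀ (c : ℝ) (u : E), 0 ≤ c → 0 ≤ u → 0 ≤ c • u)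
    (B : E →L[ℝ] E) (hB : IsPosOp B) [Nontrivial E] {μ : ℝ}
    (hμ : (spectralRadius ℝ B).toReal < μ) :
    ∃ C : ℝ, 0 ≤ C ∧ ∀ n : ℕ, ‖B ^ n‖ ≤ μ ^ (n + 1) * C := by
  classical
  set R : ℝ → E →L[ℝ] E := fun ν => Ring.inverse (algebraMap ℝ (E →L[ℝ] E) ν - B) with hRdef
  set G : Set ℝ := {t : ℝ | μ ≤ t ∧ ∀ ν : ℝ, t ≤ ν → IsPosOp (R ν)} with hGdef
  have hGne : (max μ (‖B‖ + 1)) ∈ G := by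
    refine ⟨le_max_left _ _, fun ν hν => ?_⟩
    have h1 : ‖B‖ + 1 ≤ ν := le_trans (le_max_right μ (‖B‖ + 1)) hν
    exact posR_big hsm B hB (by linarith)
  have hGbdd : BddBelow G := ⟨μ, fun t ht => ht.1⟩
  set m := sInf G with hmdef
  have hμm : μ ≤ m := le_csInf ⟨_, hGne⟩ fun t ht => ht.1
  have hrm : (spectralRadius ℝ B).toReal < m := lt_of_lt_of_le hμ hμm
  have hposgt : ∀ ν : ℝ, m < ν → IsPosOp (R ν) := by
    intro ν hν
    obtain ⟨t, htG, htν⟩ := exists_lt_of_csInf_lt ⟨_, hGne⟩ hν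
    exact htG.2 ν htν.le
  have hmunit : IsUnit (algebraMap ℝ (E →L[ℝ] E) m - B) := unit_of_gt B hrm
  have hcont : ContinuousAt (fun ν : ℝ => R ν) m := by
    have h1 : Continuous (fun ν : ℝ => algebraMap ℝ (E →L[ℝ] E) ν - B) := by
      simp_rw [Algebra.algebraMap_eq_smul_one]
      exact (continuous_id.smul continuous_const).sub continuous_const
    have h2 : ContinuousAt Ring.inverse (algebraMap ℝ (E →L[ℝ] E) m - B) := by
      have h3 := NormedRing.inverse_continuousAt hmunit.unit
      rwa [IsUnit.unit_spec] at h3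
    have h4 : ContinuousAt (Ring.inverse ∘ fun ν : ℝ => algebraMap ℝ (E →L[ℝ] E) ν - B) m :=
      ContinuousAt.comp (f := fun ν : ℝ => algebraMap ℝ (E →L[ℝ] E) ν - B) (x := m) h2
        h1.continuousAt
    exact h4
  have hRmpos : IsPosOp (R m) := by
    intro u hu
    have hseq : Filter.Tendsto (fun k : ℕ => m + 1 / ((k : ℝ) + 1)) Filter.atTop (nhds m) := by
      have h4 := tendsto_one_div_add_atTop_nhds_zero_nat (𝕜 := ℝ)
      simpa using tendsto_const_nhds.add h4
    have h5 : Filter.Tendsto (fun k : ℕ => R (m + 1 / ((k : ℝ) + 1))) Filter.atTop (nhds (R m)) :=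
      (hcont.tendsto).comp hseq
    have h6 : Filter.Tendsto (fun k : ℕ => R (m + 1 / ((k : ℝ) + 1)) u) Filter.atTop
        (nhds (R m u)) := by
      have h7 := ((ContinuousLinearMap.apply ℝ E u).continuous.tendsto (R m)).comp h5
      simpa [ContinuousLinearMap.apply_apply, Function.comp_def] using h7
    refine le_of_tendsto_of_tendsto tendsto_const_nhds h6 ?_
    refine Filter.Eventually.of_forall fun k => ?_
    exact hposgt _ (lt_add_of_pos_right m (by positivity)) u hu
  have hmμ : m = μ := by
    by_contra hne
    have hlt : μ < m := lt_of_le_of_ne hμm (Ne.symm hne)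
    set Rm := R m with hRmdef
    set δ : ℝ := min ((m - μ) / 2) (1 / (2 * (‖Rm‖ + 1))) with hδdef
    have hδ0 : 0 < δ := lt_min (by linarith) (by positivity)
    have htG : m - δ ∈ G := by
      refine ⟨?_, fun ν hν => ?_⟩
      · have h8 : δ ≤ (m - μ) / 2 := min_le_left _ _
        linarith
      rcases lt_or_ge ν m with hνm | hνm
      swap
      · rcases eq_or_lt_of_le hνm with he | hl2
        · rw [← he]; exact hRmpos
        · exact hposgt ν hl2
      · have hνμ : m - ν ≤ δ := by linarith
        have hν0 : 0 ≤ m - ν := by linarith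
        set w : E →L[ℝ] E := (m - ν) • Rm with hwdef
        have hw : ‖w‖ < 1 := by
          rw [hwdef, norm_smul (m - ν) Rm, Real.norm_eq_abs, abs_of_nonneg hν0]
          have h5 : (m - ν) * ‖Rm‖ ≤ (1 / (2 * (‖Rm‖ + 1))) * ‖Rm‖ :=
            mul_le_mul_of_nonneg_right (le_trans hνμ (min_le_right _ _)) (norm_nonneg _)
          have h6 : (1 / (2 * (‖Rm‖ + 1))) * ‖Rm‖ < 1 := by
            rw [div_mul_eq_mul_div, one_mul, div_lt_one (by positivity)]
            linarith [norm_nonneg Rm]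
          linarith
        have hsumw : Summable (fun n : ℕ => w ^ n) := summable_geometric_of_norm_lt_one hw
        have e1 : (algebraMap ℝ (E →L[ℝ] E) m - B) * w = (m - ν) • (1 : E →L[ℝ] E) := by
          rw [hwdef, mul_smul_comm, Ring.mul_inverse_cancel _ hmunit]
        have key2 : algebraMap ℝ (E →L[ℝ] E) ν - B
            = (algebraMap ℝ (E →L[ℝ] E) m - B) * (1 - w) := by
          rw [mul_sub, mul_one, e1]
          simp only [Algebra.algebraMap_eq_smul_one]
          rw [sub_right_comm, ← sub_smul, _root_.sub_sub_cancel]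
        have hunitν : IsUnit (algebraMap ℝ (E →L[ℝ] E) ν - B) := by
          rw [key2]
          exact hmunit.mul (isUnit_one_sub_of_norm_lt_one hw)
        have hmain2 : (algebraMap ℝ (E →L[ℝ] E) ν - B) * ((∑' n : ℕ, w ^ n) * Rm) = 1 := by
          rw [key2, mul_assoc, ← mul_assoc (1 - w), mul_neg_geom_series w hw, one_mul,
            Ring.mul_inverse_cancel _ hmunit]
        have hRν : R ν = ∑' n : ℕ, (m - ν) ^ n • Rm ^ (n + 1) := by
          rw [show R ν = (∑' n : ℕ, w ^ n) * Rm from rinv_eq hunitν hmain2,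
            ← hsumw.tsum_mul_right Rm]
          congr 1
          funext n
          rw [hwdef, smul_pow, smul_mul_assoc, ← pow_succ]
        have hsum2 : Summable (fun n : ℕ => (m - ν) ^ n • Rm ^ (n + 1)) := by
          refine (hsumw.mul_right Rm).congr fun n => ?_
          rw [hwdef, smul_pow, smul_mul_assoc, ← pow_succ]
        rw [hRν]
        exact IsPosOp.tsum hsum2 fun n =>
          IsPosOp.smul hsm (hRmpos.pow (n + 1)) (pow_nonneg hν0 n)
    have h9 : m ≤ m - δ := csInf_le hGbdd htG
    linarith
  have hRμpos : IsPosOp (R μ) := by rw [← hmμ]; exact hRmpos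
  have hμunit : IsUnit (algebraMap ℝ (E →L[ℝ] E) μ - B) := unit_of_gt B hμ
  have hμ0 : 0 < μ := lt_of_le_of_lt ENNReal.toReal_nonneg hμ
  have hid : ∀ u : E, μ • (R μ u) - B (R μ u) = u := by
    intro u
    have h1 : (algebraMap ℝ (E →L[ℝ] E) μ - B) * R μ = 1 := Ring.mul_inverse_cancel _ hμunit
    have h2 := congrArg (fun T : E →L[ℝ] E => T u) h1
    simpa [ContinuousLinearMap.mul_apply, ContinuousLinearMap.sub_apply,
      Algebra.algebraMap_eq_smul_one, ContinuousLinearMap.smul_apply,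
      ContinuousLinearMap.one_apply] using h2
  have hsmono : ∀ (r : ℝ) {x y : E}, 0 ≤ r → x ≤ y → r • x ≤ r • y := by
    intro r x y hr hxy
    have h3 := hsm r (y - x) hr (sub_nonneg.mpr hxy)
    rw [smul_sub] at h3
    exact sub_nonneg.mp h3
  refine ⟨‖R μ‖, norm_nonneg _, fun n => ?_⟩
  refine ContinuousLinearMap.opNorm_le_bound _ (by positivity) fun u => ?_
  have habs : (0 : E) ≤ |u| := abs_nonneg u
  set v := R μ |u| with hvdef
  have hv : (0 : E) ≤ v := hRμpos _ habs
  have hBv : B v ≤ μ • v := by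
    refine sub_nonneg.mp ?_
    rw [hid |u|]
    exact habs
  have huv : |u| ≤ μ • v := by
    calc |u| = μ • v - B v := (hid |u|).symm
      _ ≤ μ • v := sub_le_self _ (hB v hv)
  have hpowv : ∀ k : ℕ, (B ^ k) v ≤ μ ^ k • v := by
    intro k
    induction k with
    | zero => simp
    | succ k ih =>
      rw [pow_succ, ContinuousLinearMap.mul_apply]
      calc (B ^ k) (B v) ≤ (B ^ k) (μ • v) := (hB.pow k).mono hBv
        _ = μ • ((B ^ k) v) := map_smul _ _ _
        _ ≤ μ • (μ ^ k • v) := hsmono μ hμ0.le ih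
        _ = μ ^ (k + 1) • v := by rw [smul_smul, ← pow_succ']
  have hnu : (B ^ n) |u| ≤ μ ^ (n + 1) • v := by
    calc (B ^ n) |u| ≤ (B ^ n) (μ • v) := (hB.pow n).mono huv
      _ = μ • ((B ^ n) v) := map_smul _ _ _
      _ ≤ μ • (μ ^ n • v) := hsmono μ hμ0.le (hpowv n)
      _ = μ ^ (n + 1) • v := by rw [smul_smul, ← pow_succ']
  have hnorm1 : ‖(B ^ n) |u|‖ ≤ μ ^ (n + 1) * (‖R μ‖ * ‖u‖) := by
    have h5 : (0 : E) ≤ (B ^ n) |u| := (hB.pow n) _ habs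
    have h6 : (0 : E) ≤ μ ^ (n + 1) • v := hsm _ _ (by positivity) hv
    have h7 : ‖(B ^ n) |u|‖ ≤ ‖μ ^ (n + 1) • v‖ := by
      refine HasSolidNorm.solid ?_
      rw [abs_of_nonneg h5, abs_of_nonneg h6]
      exact hnu
    have h8 : ‖v‖ ≤ ‖R μ‖ * ‖u‖ := by
      have h9 := (R μ).le_opNorm |u|
      rwa [norm_abs_eq_norm] at h9
    calc ‖(B ^ n) |u|‖ ≤ ‖μ ^ (n + 1) • v‖ := h7
      _ = μ ^ (n + 1) * ‖v‖ := by
          rw [norm_smul _ v, Real.norm_eq_abs, abs_of_pos (by positivity)]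
      _ ≤ μ ^ (n + 1) * (‖R μ‖ * ‖u‖) := mul_le_mul_of_nonneg_left h8 (by positivity)
  calc ‖(B ^ n) u‖ ≤ ‖(B ^ n) |u|‖ := (hB.pow n).norm_apply_le u
    _ ≤ μ ^ (n + 1) * (‖R μ‖ * ‖u‖) := hnorm1
    _ = μ ^ (n + 1) * ‖R μ‖ * ‖u‖ := by ring

end Growth
end Stmt9Aux

open MeasureTheory ENNReal Set Filter Stmt9Aux in
/-- For λ > λ′ > −inf a, with c(λ,λ′) = sup_{x ∈ Ω} (λ + a x)/(λ′ + a x),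
one has c(λ,λ′) > 1 and spr(A_{λ′}) ≤ c(λ,λ′) · spr(A_λ). -/
theorem stmt_9
    (Ω : Set ℝ) (hΩ : MeasurableSet Ω)
    (a : ℝ → ℝ) (ha : Continuous a)
    (c c' : ℝ) (hc0 : 0 < c) (hcc' : c < c')
    (hbound : ∀ x ∈ Ω, c < a x ∧ a x < c')
    (J : ℝ → ℝ → ℝ) (hJmeas : Measurable (Function.uncurry J))
    (hJnonneg : ∀ x y, 0 ≤ J x y)
    (𝒥 : Lp ℝ 1 (volume.restrict Ω) →L[ℝ] Lp ℝ 1 (volume.restrict Ω))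
    (h𝒥 : ∀ u : Lp ℝ 1 (volume.restrict Ω),
      ⇑(𝒥 u) =ᵐ[volume.restrict Ω] fun x => ∫ y in Ω, J x y * u y)
    (A : ℝ → (Lp ℝ 1 (volume.restrict Ω) →L[ℝ] Lp ℝ 1 (volume.restrict Ω)))
    (hA : ∀ l : ℝ, -sInf (a '' Ω) < l → ∀ u : Lp ℝ 1 (volume.restrict Ω),
      ⇑(A l u) =ᵐ[volume.restrict Ω] fun x => (𝒥 u) x / (l + a x))
    (hne : Ω.Nonempty)
    (l l' : ℝ) (hl' : -sInf (a '' Ω) < l') (hll' : l' < l) :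
    1 < sSup ((fun x => (l + a x) / (l' + a x)) '' Ω) ∧
      spectralRadius ℝ (A l') ≤
        ENNReal.ofReal (sSup ((fun x => (l + a x) / (l' + a x)) '' Ω)) *
          spectralRadius ℝ (A l) := by
  classical
  obtain ⟨x₀, hx₀⟩ := hne
  have hbddB : BddBelow (a '' Ω) := ⟨c, by rintro y ⟨x, hx, rfl⟩; exact (hbound x hx).1.le⟩
  have hInf_le : ∀ x ∈ Ω, sInf (a '' Ω) ≤ a x := fun x hx => csInf_le hbddB ⟨x, hx, rfl⟩
  have hl : -sInf (a '' Ω) < l := hl'.trans hll'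
  have hl'pos : ∀ x ∈ Ω, 0 < l' + a x := fun x hx => by have := hInf_le x hx; linarith
  have hlpos : ∀ x ∈ Ω, 0 < l + a x := fun x hx => by have := hInf_le x hx; linarith
  have hd0 : 0 < l' + sInf (a '' Ω) := by linarith
  have hub : ∀ z ∈ (fun x => (l + a x) / (l' + a x)) '' Ω,
      z ≤ (l + c') / (l' + sInf (a '' Ω)) := by
    rintro z ⟨x, hx, rfl⟩
    have h1 := hInf_le x hx
    have h2 := (hbound x hx).2
    have h3 := hlpos x hx
    exact div_le_div₀ (by linarith) (by linarith) hd0 (by linarith)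
  have hbddA : BddAbove ((fun x => (l + a x) / (l' + a x)) '' Ω) := ⟨_, hub⟩
  set csup := sSup ((fun x => (l + a x) / (l' + a x)) '' Ω) with hcsupdef
  have hx₀le : (l + a x₀) / (l' + a x₀) ≤ csup := le_csSup hbddA ⟨x₀, hx₀, rfl⟩
  have hone_lt : 1 < csup :=
    lt_of_lt_of_le ((one_lt_div (hl'pos x₀ hx₀)).mpr (by linarith)) hx₀le
  have hcsup0 : 0 ≤ csup := by linarith
  refine ⟨hone_lt, ?_⟩
  have hratio : ∀ x ∈ Ω, l + a x ≤ csup * (l' + a x) := by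
    intro x hx
    have h1 : (l + a x) / (l' + a x) ≤ csup := le_csSup hbddA ⟨x, hx, rfl⟩
    exact (div_le_iff₀ (hl'pos x hx)).mp h1
  rcases subsingleton_or_nontrivial (Lp ℝ 1 (volume.restrict Ω)) with hsub | hnontriv
  · haveI : Subsingleton (Lp ℝ 1 (volume.restrict Ω) →L[ℝ] Lp ℝ 1 (volume.restrict Ω)) :=
      ⟨fun f g => ContinuousLinearMap.ext fun u => Subsingleton.elim _ _⟩
    have h0 : spectralRadius ℝ (A l') ≤ 0 := by
      unfold spectralRadius
      exact iSup₂_le fun k hk =>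
        absurd hk (spectrum.notMem_iff.mpr (isUnit_of_subsingleton _))
    exact le_trans h0 (by positivity)
  -- Nontrivial case
  have hsm : ∀ (cc : ℝ) (u : Lp ℝ 1 (volume.restrict Ω)), 0 ≤ cc → 0 ≤ u → 0 ≤ cc • u := by
    intro cc u hcc hu
    rw [← MeasureTheory.Lp.coeFn_nonneg] at hu ⊢
    filter_upwards [hu, MeasureTheory.Lp.coeFn_smul cc u] with x h1 h2
    have h3 : (0 : ℝ) ≤ u x := by simpa using h1
    simp only [Pi.zero_apply]
    rw [h2, Pi.smul_apply, smul_eq_mul]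
    exact mul_nonneg hcc h3
  have h𝒥pos : ∀ u : Lp ℝ 1 (volume.restrict Ω), 0 ≤ u → 0 ≤ 𝒥 u := by
    intro u hu
    have hu' : (0 : ℝ → ℝ) ≤ᵐ[volume.restrict Ω] ⇑u := (MeasureTheory.Lp.coeFn_nonneg u).mpr hu
    rw [← MeasureTheory.Lp.coeFn_nonneg]
    filter_upwards [h𝒥 u] with x hx
    simp only [Pi.zero_apply]
    rw [hx]
    refine integral_nonneg_of_ae ?_
    filter_upwards [hu'] with y hy
    exact mul_nonneg (hJnonneg x y) (by simpa using hy)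
  have hAposgen : ∀ t : ℝ, -sInf (a '' Ω) < t → (∀ x ∈ Ω, 0 < t + a x) → IsPosOp (A t) := by
    intro t ht htpos u hu
    rw [← MeasureTheory.Lp.coeFn_nonneg]
    have h2 : (0 : ℝ → ℝ) ≤ᵐ[volume.restrict Ω] ⇑(𝒥 u) :=
      (MeasureTheory.Lp.coeFn_nonneg _).mpr (h𝒥pos u hu)
    filter_upwards [hA t ht u, h2, ae_restrict_mem hΩ] with x h3 h4 h5
    simp only [Pi.zero_apply]
    rw [h3]
    exact div_nonneg (by simpa using h4) (htpos x h5).le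
  have hBpos : IsPosOp (A l) := hAposgen l hl hlpos
  have hSpos : IsPosOp (A l') := hAposgen l' hl' hl'pos
  have hTpos : IsPosOp (csup • A l) := IsPosOp.smul hsm hBpos hcsup0
  have hdom : ∀ u : Lp ℝ 1 (volume.restrict Ω), 0 ≤ u → (A l') u ≤ (csup • A l) u := by
    intro u hu
    rw [← MeasureTheory.Lp.coeFn_le]
    have h2 : (0 : ℝ → ℝ) ≤ᵐ[volume.restrict Ω] ⇑(𝒥 u) :=
      (MeasureTheory.Lp.coeFn_nonneg _).mpr (h𝒥pos u hu)
    rw [ContinuousLinearMap.smul_apply]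
    filter_upwards [hA l' hl' u, hA l hl u, h2, ae_restrict_mem hΩ,
      MeasureTheory.Lp.coeFn_smul csup (A l u)] with x h3 h4 h5 h6 h7
    rw [h3, h7, Pi.smul_apply, h4, smul_eq_mul]
    have h9 : (0 : ℝ) ≤ (𝒥 u) x := by simpa using h5
    have h10 : (𝒥 u) x / (l' + a x) ≤ csup * (𝒥 u) x / (l + a x) := by
      rw [div_le_div_iff₀ (hl'pos x h6) (hlpos x h6)]
      calc (𝒥 u) x * (l + a x) ≤ (𝒥 u) x * (csup * (l' + a x)) :=
            mul_le_mul_of_nonneg_left (hratio x h6) h9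
        _ = csup * (𝒥 u) x * (l' + a x) := by ring
    calc (𝒥 u) x / (l' + a x) ≤ csup * (𝒥 u) x / (l + a x) := h10
      _ = csup * ((𝒥 u) x / (l + a x)) := by rw [mul_div_assoc]
  have hnormpow : ∀ n : ℕ, ‖(A l') ^ n‖ ≤ csup ^ n * ‖(A l) ^ n‖ := by
    intro n
    have h1 : ‖(A l') ^ n‖ ≤ ‖(csup • A l) ^ n‖ :=
      opNorm_le_of_dom (hSpos.pow n) (hTpos.pow n) (dom_pow hSpos hTpos hdom n)
    calc ‖(A l') ^ n‖ ≤ ‖(csup • A l) ^ n‖ := h1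
      _ = csup ^ n * ‖(A l) ^ n‖ := by
          rw [smul_pow, norm_smul (csup ^ n) ((A l) ^ n), Real.norm_eq_abs,
            abs_of_nonneg (pow_nonneg hcsup0 n)]
  have hfinB : spectralRadius ℝ (A l) ≠ ⊤ :=
    ne_top_of_le_ne_top ENNReal.coe_ne_top (spectrum.spectralRadius_le_nnnorm (𝕜 := ℝ) (A l))
  have hkey : ∀ μ : ℝ, (spectralRadius ℝ (A l)).toReal < μ →
      spectralRadius ℝ (A l') ≤ ENNReal.ofReal (csup * μ) := by
    intro μ hμ
    obtain ⟨C, hC0, hCb⟩ := growth_bound hsm (A l) hBpos hμ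
    have hμ0 : 0 < μ := lt_of_le_of_lt ENNReal.toReal_nonneg hμ
    set K : ℝ := max 1 (μ * C) with hKdef
    have hK1 : (1 : ℝ) ≤ K := le_max_left _ _
    have hK0 : (0 : ℝ) < K := lt_of_lt_of_le one_pos hK1
    have hcμ0 : 0 ≤ csup * μ := mul_nonneg hcsup0 hμ0.le
    have hSn : ∀ n : ℕ, ‖(A l') ^ n‖ ≤ (csup * μ) ^ n * K := by
      intro n
      calc ‖(A l') ^ n‖ ≤ csup ^ n * ‖(A l) ^ n‖ := hnormpow n
        _ ≤ csup ^ n * (μ ^ (n + 1) * C) :=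
            mul_le_mul_of_nonneg_left (hCb n) (pow_nonneg hcsup0 n)
        _ = (csup * μ) ^ n * (μ * C) := by rw [mul_pow]; ring
        _ ≤ (csup * μ) ^ n * K :=
            mul_le_mul_of_nonneg_left (le_max_right _ _) (pow_nonneg hcμ0 n)
    have hlim := spectrum.spectralRadius_le_liminf_pow_nnnorm_pow_one_div (𝕜 := ℝ) (A l')
    refine le_trans hlim ?_
    have hle : ∀ᶠ n : ℕ in atTop, ((‖(A l') ^ n‖₊ : ℝ≥0∞)) ^ (1 / (n : ℝ)) ≤
        ENNReal.ofReal (csup * μ) * (ENNReal.ofReal K) ^ (1 / (n : ℝ)) := by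
      refine Filter.eventually_atTop.mpr ⟨1, fun n hn => ?_⟩
      have hn0 : ((n : ℝ)) ≠ 0 := Nat.cast_ne_zero.mpr (by omega)
      have h5 : ((‖(A l') ^ n‖₊ : ℝ≥0∞)) = ENNReal.ofReal ‖(A l') ^ n‖ :=
        (ofReal_norm _).symm
      have h6 : ((‖(A l') ^ n‖₊ : ℝ≥0∞)) ≤
          (ENNReal.ofReal (csup * μ)) ^ (n : ℕ) * ENNReal.ofReal K := by
        rw [h5, ← ENNReal.ofReal_pow hcμ0, ← ENNReal.ofReal_mul (pow_nonneg hcμ0 n)]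
        exact ENNReal.ofReal_le_ofReal (hSn n)
      calc ((‖(A l') ^ n‖₊ : ℝ≥0∞)) ^ (1 / (n : ℝ))
          ≤ ((ENNReal.ofReal (csup * μ)) ^ (n : ℕ) * ENNReal.ofReal K) ^ (1 / (n : ℝ)) :=
            ENNReal.rpow_le_rpow h6 (by positivity)
        _ = ENNReal.ofReal (csup * μ) * (ENNReal.ofReal K) ^ (1 / (n : ℝ)) := by
            rw [ENNReal.mul_rpow_of_nonneg _ _ (by positivity : (0:ℝ) ≤ 1 / (n:ℝ)),
              ← ENNReal.rpow_natCast (ENNReal.ofReal (csup * μ)) n, ← ENNReal.rpow_mul,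
              mul_one_div_cancel hn0, ENNReal.rpow_one]
    have h7 : Tendsto (fun n : ℕ => K ^ (1 / (n : ℝ))) atTop (nhds 1) := by
      have h8 : (fun n : ℕ => K ^ (1 / (n : ℝ)))
          = fun n : ℕ => Real.exp (Real.log K * (1 / (n : ℝ))) :=
        funext fun n => Real.rpow_def_of_pos hK0 _
      rw [h8]
      have h9 : Tendsto (fun n : ℕ => Real.log K * (1 / (n : ℝ))) atTop (nhds 0) := by
        simpa using (tendsto_const_nhds (x := Real.log K)).mul tendsto_one_div_atTop_nhds_zero_nat
      simpa [Function.comp_def] using (Real.continuous_exp.tendsto 0).comp h9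
    have h10 : Tendsto (fun n : ℕ => (ENNReal.ofReal K) ^ (1 / (n : ℝ))) atTop (nhds 1) := by
      have h11 : ∀ n : ℕ, (ENNReal.ofReal K) ^ (1 / (n : ℝ))
          = ENNReal.ofReal (K ^ (1 / (n : ℝ))) := fun n => ENNReal.ofReal_rpow_of_pos hK0
      simp_rw [h11]
      have h12 := (ENNReal.continuous_ofReal.tendsto 1).comp h7
      simpa [Function.comp_def] using h12
    have hg : Tendsto (fun n : ℕ =>
        ENNReal.ofReal (csup * μ) * (ENNReal.ofReal K) ^ (1 / (n : ℝ))) atTop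
        (nhds (ENNReal.ofReal (csup * μ))) := by
      have h13 := ENNReal.Tendsto.const_mul (a := ENNReal.ofReal (csup * μ)) h10 (Or.inr ENNReal.ofReal_ne_top)
      simpa using h13
    calc Filter.liminf (fun n : ℕ => ((‖(A l') ^ n‖₊ : ℝ≥0∞)) ^ (1 / (n : ℝ))) atTop
        ≤ Filter.liminf (fun n : ℕ =>
            ENNReal.ofReal (csup * μ) * (ENNReal.ofReal K) ^ (1 / (n : ℝ))) atTop :=
          Filter.liminf_le_liminf hle
      _ = ENNReal.ofReal (csup * μ) := hg.liminf_eq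
  refine ENNReal.le_of_forall_pos_le_add fun ε hε hlt => ?_
  set δ : ℝ := (ε : ℝ) / (csup + 1) with hδdef
  have hδ0 : 0 < δ := div_pos (by exact_mod_cast hε) (by linarith)
  have h1 := hkey ((spectralRadius ℝ (A l)).toReal + δ) (by linarith)
  have h2 : ENNReal.ofReal (csup * ((spectralRadius ℝ (A l)).toReal + δ))
      = ENNReal.ofReal csup * spectralRadius ℝ (A l) + ENNReal.ofReal csup * ENNReal.ofReal δ := by
    rw [ENNReal.ofReal_mul hcsup0, ENNReal.ofReal_add ENNReal.toReal_nonneg hδ0.le,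
      ENNReal.ofReal_toReal hfinB, mul_add]
  have h3 : ENNReal.ofReal csup * ENNReal.ofReal δ ≤ (ε : ℝ≥0∞) := by
    rw [← ENNReal.ofReal_mul hcsup0]
    have h4 : csup * δ ≤ (ε : ℝ) := by
      rw [hδdef, mul_div_assoc']
      rw [div_le_iff₀ (show (0:ℝ) < csup + 1 by linarith)]
      nlinarith [ε.coe_nonneg]
    calc ENNReal.ofReal (csup * δ) ≤ ENNReal.ofReal (ε : ℝ) := ENNReal.ofReal_le_ofReal h4
      _ = (ε : ℝ≥0∞) := ENNReal.ofReal_coe_nnreal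
  calc spectralRadius ℝ (A l') ≤
      ENNReal.ofReal (csup * ((spectralRadius ℝ (A l)).toReal + δ)) := h1
    _ = ENNReal.ofReal csup * spectralRadius ℝ (A l) + ENNReal.ofReal csup * ENNReal.ofReal δ := h2
    _ ≤ ENNReal.ofReal csup * spectralRadius ℝ (A l) + (ε : ℝ≥0∞) := add_le_add_right h3 _
end

section
/- Suppose spr(A_0) < 1, where A_0 u = (𝒥u)/a (the operator A_λ at λ = 0; note 0 > −inf a since a > c > 0). Then every element z of the spectrum of L, acting on complex L¹(Ω), satisfies Re z < 0. -/
open MeasureTheory ENNReal Set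

set_option synthInstance.maxHeartbeats 1000000
set_option maxHeartbeats 1000000

namespace Stmt12


variable {𝕜 : Type*} [RCLike 𝕜] {μ : Measure ℝ}

theorem mulMem {g : ℝ → 𝕜} (hg : AEStronglyMeasurable g μ) {C : ℝ}
    (hbd : ∀ᵐ x ∂μ, ‖g x‖ ≤ C) (u : Lp 𝕜 1 μ) : MemLp (fun x => g x * u x) 1 μ :=
  MemLp.of_le_mul (Lp.memLp u) (hg.mul (Lp.aestronglyMeasurable u))
    (hbd.mono fun x hx => by
      rw [norm_mul]
      exact mul_le_mul_of_nonneg_right hx (norm_nonneg _))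

noncomputable def mulCLM (μ : Measure ℝ) (g : ℝ → 𝕜) (hg : AEStronglyMeasurable g μ)
    (C : ℝ) (hbd : ∀ᵐ x ∂μ, ‖g x‖ ≤ C) : Lp 𝕜 1 μ →L[𝕜] Lp 𝕜 1 μ :=
  LinearMap.mkContinuous
    { toFun := fun u => (mulMem hg hbd u).toLp _
      map_add' := fun u v => by
        refine Lp.ext ?_
        filter_upwards [(mulMem hg hbd u).coeFn_toLp, (mulMem hg hbd v).coeFn_toLp,
          (mulMem hg hbd (u + v)).coeFn_toLp, Lp.coeFn_add u v,
          Lp.coeFn_add ((mulMem hg hbd u).toLp _) ((mulMem hg hbd v).toLp _)]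
          with x h1 h2 h3 h4 h5
        simp only [h3, h5, Pi.add_apply, h1, h2, h4]
        ring
      map_smul' := fun r u => by
        refine Lp.ext ?_
        filter_upwards [(mulMem hg hbd u).coeFn_toLp, (mulMem hg hbd (r • u)).coeFn_toLp,
          Lp.coeFn_smul r u, Lp.coeFn_smul r ((mulMem hg hbd u).toLp _)] with x h1 h2 h3 h4
        simp only [RingHom.id_apply, h2, h4, Pi.smul_apply, h1, h3, smul_eq_mul]
        ring } C
    (fun u => by
      refine (Lp.norm_le_mul_norm_of_ae_le_mul (c := C) ?_)
      filter_upwards [(mulMem hg hbd u).coeFn_toLp, hbd] with x h1 h2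
      simp only [LinearMap.coe_mk, AddHom.coe_mk]
      rw [h1, norm_mul]
      exact mul_le_mul_of_nonneg_right h2 (norm_nonneg _))

theorem mulCLM_apply {g : ℝ → 𝕜} (hg : AEStronglyMeasurable g μ) {C : ℝ}
    (hbd : ∀ᵐ x ∂μ, ‖g x‖ ≤ C) (u : Lp 𝕜 1 μ) :
    ⇑(mulCLM μ g hg C hbd u) =ᵐ[μ] fun x => g x * u x :=
  MemLp.coeFn_toLp (mulMem hg hbd u)



variable {μ : Measure ℝ}

local notation "E" => Lp ℝ 1 (μ)

/-- A positive operator on `L¹`. -/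
def Pos (T : E →L[ℝ] E) : Prop := ∀ u : E, 0 ≤ u → 0 ≤ T u


theorem smul_nonneg_Lp {v : E} (hv : 0 ≤ v) {t : ℝ} (ht : 0 ≤ t) : 0 ≤ t • v := by
  rw [← Lp.coeFn_nonneg] at hv ⊢
  filter_upwards [hv, Lp.coeFn_smul t v] with x h1 h2
  rw [h2, Pi.smul_apply, smul_eq_mul]
  exact mul_nonneg ht h1

theorem Pos.mul {S T : E →L[ℝ] E} (hS : Pos S) (hT : Pos T) : Pos (S * T) :=
  fun u hu => hS _ (hT u hu)

theorem Pos.pow {T : E →L[ℝ] E} (hT : Pos T) (n : ℕ) : Pos (T ^ n) := by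
  induction n with
  | zero => intro u hu; simpa using hu
  | succ n ih => rw [pow_succ]; exact ih.mul hT

theorem Pos.smul {T : E →L[ℝ] E} (hT : Pos T) {t : ℝ} (ht : 0 ≤ t) : Pos (t • T) :=
  fun u hu => by
    rw [ContinuousLinearMap.smul_apply]
    exact smul_nonneg_Lp (hT u hu) ht

theorem Pos.tsum {f : ℕ → E →L[ℝ] E} (hf : ∀ n, Pos (f n)) (hsum : Summable f) :
    Pos (∑' n, f n) := by
  intro u hu
  have h1 : (∑' n, f n) u = ∑' n, f n u := by
    exact ContinuousLinearMap.map_tsum (ContinuousLinearMap.apply ℝ E u) hsum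
  rw [h1]
  exact tsum_nonneg fun n => hf n u hu

/-- Neumann-series perturbation: if `V` is a unit with inverse `W` and `‖t • W‖ < 1`,
then `V - t • 1` is a unit with inverse `(∑' (t • W)^n) * W`. -/
theorem inverse_sub_smul_one {V W : E →L[ℝ] E} (h1 : V * W = 1) (h2 : W * V = 1)
    {t : ℝ} (hx : ‖t • W‖ < 1) :
    IsUnit (V - t • (1 : E →L[ℝ] E)) ∧
      Ring.inverse (V - t • (1 : E →L[ℝ] E)) = (∑' n : ℕ, (t • W) ^ n) * W := by
  have hfac : V * (1 - t • W) = V - t • (1 : E →L[ℝ] E) := by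
    rw [mul_sub, mul_one, mul_smul_comm, h1]
  set w : (E →L[ℝ] E)ˣ := (Units.mk V W (by rw [h1]) (by rw [h2])) * Units.oneSub (t • W) hx
    with hw
  have hval : (w : E →L[ℝ] E) = V - t • (1 : E →L[ℝ] E) := by
    rw [hw, Units.val_mul]
    simpa using hfac
  constructor
  · exact hval ▸ w.isUnit
  · rw [← hval, Ring.inverse_unit w, hw, mul_inv_rev, Units.val_mul]
    rfl

theorem pos_inverse_step {A : E →L[ℝ] E} {t s : ℝ} (hst : s ≤ t)
    (ht : IsUnit (t • (1 : E →L[ℝ] E) - A))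
    (hWpos : Pos (Ring.inverse (t • (1 : E →L[ℝ] E) - A)))
    (hsmall : ‖(t - s) • Ring.inverse (t • (1 : E →L[ℝ] E) - A)‖ < 1) :
    IsUnit (s • (1 : E →L[ℝ] E) - A) ∧
      Pos (Ring.inverse (s • (1 : E →L[ℝ] E) - A)) := by
  set V := t • (1 : E →L[ℝ] E) - A with hV
  set W := Ring.inverse V with hW
  have h1 : V * W = 1 := Ring.mul_inverse_cancel V ht
  have h2 : W * V = 1 := Ring.inverse_mul_cancel V ht
  have hkey := inverse_sub_smul_one (μ := μ) h1 h2 hsmall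
  have hrepl : V - (t - s) • (1 : E →L[ℝ] E) = s • (1 : E →L[ℝ] E) - A := by
    rw [hV]; rw [sub_smul]; abel
  rw [hrepl] at hkey
  refine ⟨hkey.1, ?_⟩
  rw [hkey.2]
  exact (Pos.tsum (fun n => ((hWpos.smul (sub_nonneg.2 hst)).pow n))
    (summable_geometric_of_norm_lt_one hsmall)).mul hWpos








theorem pos_one : Pos (1 : E →L[ℝ] E) := fun u hu => by simpa using hu

theorem base_pos {A : E →L[ℝ] E} (hA : Pos A) {t0 : ℝ} (h0 : 0 < t0) (hn : ‖A‖ < t0) :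
    IsUnit (t0 • (1 : E →L[ℝ] E) - A) ∧ Pos (Ring.inverse (t0 • (1 : E →L[ℝ] E) - A)) := by
  have hx : ‖t0⁻¹ • A‖ < 1 := by
    rw [show ‖t0⁻¹ • A‖ = ‖t0⁻¹‖ * ‖A‖ from norm_smul t0⁻¹ A, norm_inv, Real.norm_eq_abs,
      abs_of_pos h0]
    rw [inv_mul_lt_iff₀ h0, mul_one]
    exact hn
  have hu1 : (t0 • (1 : E →L[ℝ] E)) * (t0⁻¹ • (1 : E →L[ℝ] E)) = 1 := by
    rw [smul_mul_smul_comm, mul_one, mul_inv_cancel₀ h0.ne', one_smul]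
  have hu2 : (t0⁻¹ • (1 : E →L[ℝ] E)) * (t0 • (1 : E →L[ℝ] E)) = 1 := by
    rw [smul_mul_smul_comm, mul_one, inv_mul_cancel₀ h0.ne', one_smul]
  set w : (E →L[ℝ] E)ˣ :=
    (Units.mk _ _ hu1 hu2) * Units.oneSub (t0⁻¹ • A) hx with hw
  have hval : (w : E →L[ℝ] E) = t0 • (1 : E →L[ℝ] E) - A := by
    rw [hw, Units.val_mul]
    show (t0 • (1 : E →L[ℝ] E)) * (1 - t0⁻¹ • A) = _
    rw [mul_sub, mul_one, smul_mul_smul_comm, mul_inv_cancel₀ h0.ne', one_mul, one_smul]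
  constructor
  · exact hval ▸ w.isUnit
  · rw [← hval, Ring.inverse_unit w, hw, mul_inv_rev, Units.val_mul]
    show Pos ((∑' n : ℕ, (t0⁻¹ • A) ^ n) * (t0⁻¹ • (1 : E →L[ℝ] E)))
    exact (Pos.tsum (fun n => ((hA.smul (inv_nonneg.2 h0.le)).pow n))
      (summable_geometric_of_norm_lt_one hx)).mul (pos_one.smul (inv_nonneg.2 h0.le))

theorem pos_resolvent_one {A : E →L[ℝ] E} (hA : Pos A)
    (hunit : ∀ t : ℝ, 1 ≤ t → IsUnit (t • (1 : E →L[ℝ] E) - A)) :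
    Pos (Ring.inverse (1 - A)) := by
  set t0 : ℝ := ‖A‖ + 1 with ht0def
  have ht0 : 1 ≤ t0 := by rw [ht0def]; linarith [norm_nonneg A]
  have hn : ‖A‖ < t0 := by rw [ht0def]; linarith
  -- continuity and bound
  have hcont : ContinuousOn (fun t : ℝ => Ring.inverse (t • (1 : E →L[ℝ] E) - A)) (Icc 1 t0) := by
    intro t ht
    have h1 : ContinuousAt (fun t : ℝ => t • (1 : E →L[ℝ] E) - A) t :=
      ((continuous_id.smul continuous_const).sub continuous_const).continuousAt
    have h2 := NormedRing.inverse_continuousAt (hunit t ht.1).unit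
    rw [IsUnit.unit_spec] at h2
    have h1 : Filter.Tendsto (fun t : ℝ => t • (1 : E →L[ℝ] E) - A) (nhds t)
        (nhds (t • (1 : E →L[ℝ] E) - A)) :=
      ((continuous_id.smul continuous_const).sub continuous_const).tendsto t
    have h4 : ContinuousAt (fun t : ℝ => Ring.inverse (t • (1 : E →L[ℝ] E) - A)) t := ContinuousAt.comp (g := Ring.inverse) (x := t) h2 h1
    exact h4.continuousWithinAt
  obtain ⟨M, hM⟩ := isCompact_Icc.exists_bound_of_continuousOn hcont
  have hM0 : 0 ≤ M := le_trans (norm_nonneg _) (hM 1 ⟨le_refl 1, ht0⟩)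
  set δ : ℝ := (2 * (M + 1))⁻¹ with hδdef
  have hδ0 : 0 < δ := by positivity
  -- one step down
  have step : ∀ s t : ℝ, 1 ≤ s → s ≤ t → t ≤ t0 → t - s ≤ δ →
      Pos (Ring.inverse (t • (1 : E →L[ℝ] E) - A)) →
      Pos (Ring.inverse (s • (1 : E →L[ℝ] E) - A)) := by
    intro s t hs hst htt0 hdiff hpos
    refine (pos_inverse_step hst (hunit t (hs.trans hst)) hpos ?_).2
    rw [show ‖(t - s) • Ring.inverse (t • (1 : E →L[ℝ] E) - A)‖
        = ‖t - s‖ * ‖Ring.inverse (t • (1 : E →L[ℝ] E) - A)‖ from norm_smul (t-s) (Ring.inverse (t • (1 : E →L[ℝ] E) - A)),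
      Real.norm_eq_abs, abs_of_nonneg (sub_nonneg.2 hst)]
    have hWM : ‖Ring.inverse (t • (1 : E →L[ℝ] E) - A)‖ ≤ M := hM t ⟨hs.trans hst, htt0⟩
    calc (t - s) * ‖Ring.inverse (t • (1 : E →L[ℝ] E) - A)‖ ≤ δ * M := by
          apply mul_le_mul hdiff hWM (norm_nonneg _) hδ0.le
      _ < 1 := by
          rw [hδdef]
          rw [inv_mul_lt_iff₀ (by positivity)]
          nlinarith
  have key : ∀ n : ℕ, Pos (Ring.inverse ((max 1 (t0 - n * δ)) • (1 : E →L[ℝ] E) - A)) := by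
    intro n
    induction n with
    | zero =>
      simpa [max_eq_right ht0] using (base_pos hA (by linarith) hn).2
    | succ n ih =>
      refine step _ _ (le_max_left _ _) ?_ ?_ ?_ ih
      · exact max_le_max le_rfl (by push_cast; nlinarith)
      · exact max_le ht0 (by nlinarith [Nat.cast_nonneg (α := ℝ) n, hδ0])
      · push_cast
        rw [sub_le_iff_le_add]
        have h1 : (1:ℝ) ≤ max 1 (t0 - ((n:ℝ)+1) * δ) := le_max_left _ _
        have h2 : t0 - ((n:ℝ)+1) * δ ≤ max 1 (t0 - ((n:ℝ)+1) * δ) := le_max_right _ _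
        exact max_le (by linarith) (by linarith)
  obtain ⟨n, hnn⟩ := exists_nat_ge ((t0 - 1) / δ)
  have hend : max 1 (t0 - n * δ) = 1 := by
    rw [max_eq_left]
    rw [div_le_iff₀ hδ0] at hnn
    linarith
  have := key n
  rwa [hend, one_smul] at this



/-- Continuity method: if `1 - s • T` is uniformly bounded below for `s ∈ [0,1]`,
then `1 - T` is invertible. -/
theorem isUnit_one_sub_of_bound {F : Type*} [NormedAddCommGroup F] [NormedSpace ℂ F]
    [CompleteSpace F] (T : F →L[ℂ] F) (K : ℝ) (hK : 0 ≤ K)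
    (h : ∀ s : ℝ, 0 ≤ s → s ≤ 1 → ∀ u : F, ‖u‖ ≤ K * ‖u - (s : ℂ) • T u‖) :
    IsUnit (1 - T) := by
  set δ : ℝ := ((K + 1) * (‖T‖ + 1) * 2)⁻¹ with hδdef
  have hδ0 : 0 < δ := by positivity
  have hinvbd : ∀ s : ℝ, 0 ≤ s → s ≤ 1 → ∀ w : (F →L[ℂ] F)ˣ,
      (w : F →L[ℂ] F) = 1 - (s : ℂ) • T → ‖((w⁻¹ : (F →L[ℂ] F)ˣ) : F →L[ℂ] F)‖ ≤ K := by
    intro s hs0 hs1 w hw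
    refine ContinuousLinearMap.opNorm_le_bound _ hK fun v => ?_
    have h2 : (1 - (s : ℂ) • T) ((↑w⁻¹ : F →L[ℂ] F) v) = v := by
      rw [← hw, ← ContinuousLinearMap.mul_apply, w.mul_inv, ContinuousLinearMap.one_apply]
    have h3 := h s hs0 hs1 ((↑w⁻¹ : F →L[ℂ] F) v)
    rw [show (↑w⁻¹ : F →L[ℂ] F) v - (s : ℂ) • T ((↑w⁻¹ : F →L[ℂ] F) v)
        = (1 - (s : ℂ) • T) ((↑w⁻¹ : F →L[ℂ] F) v) by
        simp [ContinuousLinearMap.sub_apply, ContinuousLinearMap.smul_apply], h2] at h3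
    exact h3
  have step : ∀ s s' : ℝ, 0 ≤ s → s ≤ 1 → 0 ≤ s' → s' ≤ 1 → |s' - s| ≤ δ →
      IsUnit (1 - (s : ℂ) • T) → IsUnit (1 - (s' : ℂ) • T) := by
    intro s s' hs0 hs1 hs'0 hs'1 hdiff hu
    obtain ⟨w, hw⟩ := hu
    have hbd := hinvbd s hs0 hs1 w hw
    have hsmall : ‖((s' - s : ℝ) : ℂ) • ((↑w⁻¹ : F →L[ℂ] F) * T)‖ < 1 := by
      rw [show ‖((s' - s : ℝ) : ℂ) • ((↑w⁻¹ : F →L[ℂ] F) * T)‖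
          = ‖((s' - s : ℝ) : ℂ)‖ * ‖(↑w⁻¹ : F →L[ℂ] F) * T‖ from norm_smul ((s' - s : ℝ) : ℂ) ((↑w⁻¹ : F →L[ℂ] F) * T)]
      have hmul : ‖(↑w⁻¹ : F →L[ℂ] F) * T‖ ≤ K * ‖T‖ :=
        le_trans (ContinuousLinearMap.opNorm_comp_le _ _)
          (mul_le_mul_of_nonneg_right hbd (norm_nonneg _))
      have hnc : ‖((s' - s : ℝ) : ℂ)‖ = |s' - s| := by
        rw [Complex.norm_real, Real.norm_eq_abs]
      rw [hnc]
      calc |s' - s| * ‖(↑w⁻¹ : F →L[ℂ] F) * T‖ ≤ δ * ((K + 1) * (‖T‖ + 1)) := by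
            have h5 : ‖(↑w⁻¹ : F →L[ℂ] F) * T‖ ≤ (K + 1) * (‖T‖ + 1) := by
              nlinarith [norm_nonneg T, norm_nonneg ((↑w⁻¹ : F →L[ℂ] F) * T)]
            exact mul_le_mul hdiff h5 (norm_nonneg _) hδ0.le
        _ < 1 := by
            rw [hδdef, inv_mul_lt_iff₀ (by positivity)]
            nlinarith [hK, norm_nonneg T]
    have hfac : 1 - (s' : ℂ) • T
        = (↑w : F →L[ℂ] F) * (1 - ((s' - s : ℝ) : ℂ) • ((↑w⁻¹ : F →L[ℂ] F) * T)) := by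
      rw [mul_sub, mul_one, mul_smul_comm, ← mul_assoc, w.mul_inv, one_mul, hw,
        sub_sub, ← add_smul]
      norm_num
    rw [hfac]
    exact w.isUnit.mul (isUnit_one_sub_of_norm_lt_one hsmall)
  have key : ∀ n : ℕ, IsUnit (1 - ((min 1 (n * δ) : ℝ) : ℂ) • T) := by
    intro n
    induction n with
    | zero => simp
    | succ n ih =>
      refine step (min 1 (n * δ)) (min 1 ((n + 1 : ℕ) * δ)) (le_min zero_le_one (by positivity))
        (min_le_left _ _) (le_min zero_le_one (by positivity)) (min_le_left _ _) ?_ ih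
      rw [abs_of_nonneg (by
        push_cast
        refine sub_nonneg.2 (min_le_min le_rfl ?_)
        nlinarith [Nat.cast_nonneg (α := ℝ) n, hδ0])]
      push_cast
      rcases le_total (1 : ℝ) (n * δ) with hc | hc
      · rw [min_eq_left hc]
        have := min_le_left (1 : ℝ) ((n + 1) * δ)
        linarith
      · rw [min_eq_right hc]
        have := min_le_right (1 : ℝ) ((n + 1) * δ)
        linarith
  obtain ⟨n, hn⟩ := exists_nat_ge (1 / δ)
  have hmin : min 1 ((n : ℝ) * δ) = 1 := by
    rw [min_eq_left]
    rw [div_le_iff₀ hδ0] at hn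
    linarith
  have := key n
  rwa [hmin, Complex.ofReal_one, one_smul] at this


end Stmt12

namespace Stmt12

variable {ν : Measure ℝ}

noncomputable def absLp (u : Lp ℂ 1 ν) : Lp ℝ 1 ν :=
  ((Lp.memLp u).norm).toLp (fun x => ‖u x‖)

theorem absLp_coeFn (u : Lp ℂ 1 ν) : ⇑(absLp u) =ᵐ[ν] fun x => ‖u x‖ :=
  MemLp.coeFn_toLp _

theorem absLp_norm (u : Lp ℂ 1 ν) : ‖absLp u‖ = ‖u‖ := by
  rw [Lp.norm_def, Lp.norm_def, eLpNorm_congr_ae (absLp_coeFn u), eLpNorm_norm]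

end Stmt12

open Stmt12

/-- If spr(A₀) < 1, where A₀u = (𝒥u)/a, then every element z of the
spectrum of L acting on complex L¹(Ω) satisfies Re z < 0. -/
theorem stmt_12
    (Ω : Set ℝ) (hΩ : MeasurableSet Ω)
    (a : ℝ → ℝ) (ha : Continuous a)
    (c c' : ℝ) (hc0 : 0 < c) (hcc' : c < c')
    (hbound : ∀ x ∈ Ω, c < a x ∧ a x < c')
    (J : ℝ → ℝ → ℝ) (hJmeas : Measurable (Function.uncurry J))
    (hJnonneg : ∀ x y, 0 ≤ J x y)
    (𝒥 : Lp ℝ 1 (volume.restrict Ω) →L[ℝ] Lp ℝ 1 (volume.restrict Ω))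
    (h𝒥 : ∀ u : Lp ℝ 1 (volume.restrict Ω),
      ⇑(𝒥 u) =ᵐ[volume.restrict Ω] fun x => ∫ y in Ω, J x y * u y)
    (L : Lp ℝ 1 (volume.restrict Ω) →L[ℝ] Lp ℝ 1 (volume.restrict Ω))
    (hL : ∀ u : Lp ℝ 1 (volume.restrict Ω),
      ⇑(L u) =ᵐ[volume.restrict Ω] fun x => (𝒥 u) x - a x * u x)
    -- the operator A₀ u = (𝒥 u)/a
    (A0 : Lp ℝ 1 (volume.restrict Ω) →L[ℝ] Lp ℝ 1 (volume.restrict Ω))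
    (hA0 : ∀ u : Lp ℝ 1 (volume.restrict Ω),
      ⇑(A0 u) =ᵐ[volume.restrict Ω] fun x => (𝒥 u) x / a x)
    (hspr : spectralRadius ℝ A0 < 1)
    -- the operator L acting on complex L¹(Ω)
    (Lc : Lp ℂ 1 (volume.restrict Ω) →L[ℂ] Lp ℂ 1 (volume.restrict Ω))
    (hLc : ∀ u : Lp ℂ 1 (volume.restrict Ω),
      ⇑(Lc u) =ᵐ[volume.restrict Ω]
        fun x => (∫ y in Ω, (J x y : ℂ) * u y) - (a x : ℂ) * u x) :
    ∀ z ∈ spectrum ℂ Lc, z.re < 0 := by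
  intro z hz
  by_contra hre
  push_neg at hre
  have haΩ : ∀ᵐ x ∂(volume.restrict Ω), x ∈ Ω := ae_restrict_mem hΩ
  have hac : ∀ᵐ x ∂(volume.restrict Ω), c < a x ∧ a x < c' :=
    haΩ.mono fun x hx => hbound x hx
  -- A0 is a positive operator
  have hA0pos : Pos (μ := volume.restrict Ω) A0 := by
    intro u hu
    rw [← Lp.coeFn_nonneg] at hu ⊢
    have hint : ∀ x, 0 ≤ ∫ y in Ω, J x y * u y := fun x =>
      integral_nonneg_of_ae (hu.mono fun y hy =>
        mul_nonneg (hJnonneg x y) (by simpa using hy))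
    filter_upwards [hA0 u, h𝒥 u, hac] with x h1 h2 h3
    simp only [Pi.zero_apply]
    rw [h1, h2]
    exact div_nonneg (hint x) (by linarith [h3.1])
  -- every t ≥ 1 is in the real resolvent set of A0
  have hUnits : ∀ t : ℝ, 1 ≤ t →
      IsUnit (t • (1 : Lp ℝ 1 (volume.restrict Ω) →L[ℝ] Lp ℝ 1 (volume.restrict Ω)) - A0) := by
    intro t ht
    have hnot : t ∉ spectrum ℝ A0 := by
      intro hmem
      have hle : (‖t‖₊ : ℝ≥0∞) ≤ spectralRadius ℝ A0 :=
        le_iSup₂ (f := fun k (_ : k ∈ spectrum ℝ A0) => (‖k‖₊ : ℝ≥0∞)) t hmem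
      have hlt : (‖t‖₊ : ℝ≥0∞) < 1 := lt_of_le_of_lt hle hspr
      rw [← ENNReal.coe_one, ENNReal.coe_lt_coe] at hlt
      have h2 : ‖t‖ < 1 := hlt
      rw [Real.norm_eq_abs] at h2
      have := le_abs_self t
      linarith
    have := spectrum.notMem_iff.mp hnot
    rwa [Algebra.algebraMap_eq_smul_one] at this
  have hRunit : IsUnit
      (1 - A0 : Lp ℝ 1 (volume.restrict Ω) →L[ℝ] Lp ℝ 1 (volume.restrict Ω)) := by
    have := hUnits 1 le_rfl
    rwa [one_smul] at this
  have hRpos := pos_resolvent_one hA0pos hUnits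
  -- complex multiplication operators
  have hameas : AEStronglyMeasurable (fun x => ((a x : ℝ) : ℂ)) (volume.restrict Ω) :=
    (Complex.continuous_ofReal.comp ha).aestronglyMeasurable
  have habd : ∀ᵐ x ∂(volume.restrict Ω), ‖((a x : ℝ) : ℂ)‖ ≤ c' := by
    filter_upwards [hac] with x hx
    rw [Complex.norm_real, Real.norm_eq_abs, abs_of_pos (lt_trans hc0 hx.1)]
    exact hx.2.le
  set Ma := mulCLM (volume.restrict Ω) _ hameas c' habd with hMadef
  set Jc := Lc + Ma with hJcdef
  have hJc : ∀ u : Lp ℂ 1 (volume.restrict Ω),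
      ⇑(Jc u) =ᵐ[volume.restrict Ω] fun x => ∫ y in Ω, (J x y : ℂ) * u y := by
    intro u
    filter_upwards [hLc u, mulCLM_apply hameas habd u, Lp.coeFn_add (Lc u) (Ma u)]
      with x h1 h2 h3
    have h4 : Jc u = Lc u + Ma u := rfl
    rw [h4, h3]
    simp only [Pi.add_apply]
    rw [h1, h2]
    ring
  -- bounds for z + a x
  have hza : ∀ᵐ x ∂(volume.restrict Ω),
      c < a x ∧ a x ≤ ‖z + (a x : ℂ)‖ ∧ z + (a x : ℂ) ≠ 0 := by
    filter_upwards [hac] with x hx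
    have h1 : a x ≤ ‖z + (a x : ℂ)‖ := by
      have h2 := Complex.re_le_norm (z + (a x : ℂ))
      rw [Complex.add_re, Complex.ofReal_re] at h2
      linarith
    refine ⟨hx.1, h1, ?_⟩
    intro h0
    rw [h0, norm_zero] at h1
    linarith [hx.1]
  have hgmeas : AEStronglyMeasurable (fun x => (z + (a x : ℂ))⁻¹) (volume.restrict Ω) :=
    (((Complex.measurable_ofReal.comp ha.measurable).const_add z).inv).aestronglyMeasurable
  have hgbd : ∀ᵐ x ∂(volume.restrict Ω), ‖(z + (a x : ℂ))⁻¹‖ ≤ c⁻¹ := by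
    filter_upwards [hza] with x hx
    rw [norm_inv]
    exact inv_anti₀ hc0 (le_trans hx.1.le hx.2.1)
  set Mzi := mulCLM (volume.restrict Ω) _ hgmeas c⁻¹ hgbd with hMzidef
  have hMzmeas : AEStronglyMeasurable (fun x => z + (a x : ℂ)) (volume.restrict Ω) :=
    (continuous_const.add (Complex.continuous_ofReal.comp ha)).aestronglyMeasurable
  have hMzbd : ∀ᵐ x ∂(volume.restrict Ω), ‖z + (a x : ℂ)‖ ≤ ‖z‖ + c' := by
    filter_upwards [hac] with x hx
    refine le_trans (norm_add_le _ _) ?_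
    rw [Complex.norm_real, Real.norm_eq_abs, abs_of_pos (lt_trans hc0 hx.1)]
    linarith [hx.2]
  set Mz := mulCLM (volume.restrict Ω) _ hMzmeas (‖z‖ + c') hMzbd with hMzdef
  set Az := Mzi * Jc with hAzdef
  -- the key uniform lower bound
  have hKb : ∀ s : ℝ, 0 ≤ s → s ≤ 1 → ∀ u : Lp ℂ 1 (volume.restrict Ω),
      ‖u‖ ≤ ‖Ring.inverse (1 - A0 :
          Lp ℝ 1 (volume.restrict Ω) →L[ℝ] Lp ℝ 1 (volume.restrict Ω))‖ *
        ‖u - (s : ℂ) • Az u‖ := by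
    intro s hs0 hs1 u
    set w := u - (s : ℂ) • Az u with hwdef
    set v := absLp u with hvdef
    set W := absLp w with hWdef
    have hu_ae : ⇑v =ᵐ[volume.restrict Ω] fun x => ‖⇑u x‖ := by
      rw [hvdef]; exact absLp_coeFn u
    have hW_ae : ⇑W =ᵐ[volume.restrict Ω] fun x => ‖⇑w x‖ := by
      rw [hWdef]; exact absLp_coeFn w
    have hIeq : ∀ x, (∫ y in Ω, J x y * v y) = ∫ y in Ω, J x y * ‖u y‖ := fun x =>
      integral_congr_ae (hu_ae.mono fun y hy => by beta_reduce; rw [hy])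
    have hInn : ∀ x, 0 ≤ ∫ y in Ω, J x y * ‖u y‖ := fun x =>
      integral_nonneg fun y => mul_nonneg (hJnonneg x y) (norm_nonneg _)
    have hIbd : ∀ x, ‖∫ y in Ω, (J x y : ℂ) * u y‖ ≤ ∫ y in Ω, J x y * ‖u y‖ := fun x => by
      refine le_trans (norm_integral_le_integral_norm _) (le_of_eq ?_)
      refine integral_congr_ae (Filter.Eventually.of_forall fun y => ?_)
      simp only [norm_mul, Complex.norm_real, Real.norm_eq_abs,
        abs_of_nonneg (hJnonneg x y)]
    have hAzu : Az u = Mzi (Jc u) := rfl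
    have hptw : ∀ᵐ x ∂(volume.restrict Ω), v x ≤ (A0 v) x + W x ∧ 0 ≤ v x := by
      filter_upwards [hu_ae, hW_ae, hA0 v, h𝒥 v, hJc u,
        mulCLM_apply hgmeas hgbd (Jc u), Lp.coeFn_sub u ((s : ℂ) • Az u),
        Lp.coeFn_smul (s : ℂ) (Az u), hza] with x h1 h2 h3 h4 h5 h6 h7 h8 h9
      have hax : 0 < a x := lt_trans hc0 h9.1
      have hA0vx : (A0 v) x = (∫ y in Ω, J x y * ‖u y‖) / a x := by
        rw [h3, h4, hIeq]
      have hAzux : ‖(Az u) x‖ ≤ (∫ y in Ω, J x y * ‖u y‖) / a x := by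
        rw [hAzu, h6, norm_mul, norm_inv, div_eq_inv_mul]
        refine mul_le_mul ?_ ?_ (norm_nonneg _) (by positivity)
        · exact inv_anti₀ hax h9.2.1
        · rw [h5]; exact hIbd x
      have hwx : W x = ‖u x - (s : ℂ) * (Az u) x‖ := by
        rw [h2]
        simp only [hwdef]
        rw [h7]
        simp only [Pi.sub_apply]
        rw [h8]
        simp only [Pi.smul_apply, smul_eq_mul]
      constructor
      · rw [h1, hA0vx, hwx]
        have hux : ‖u x‖ ≤ ‖u x - (s : ℂ) * (Az u) x‖ + s * ‖(Az u) x‖ := by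
          have h10 : u x = (u x - (s : ℂ) * (Az u) x) + (s : ℂ) * (Az u) x := by ring
          calc ‖u x‖ = ‖(u x - (s : ℂ) * (Az u) x) + (s : ℂ) * (Az u) x‖ := by rw [← h10]
            _ ≤ ‖u x - (s : ℂ) * (Az u) x‖ + ‖(s : ℂ) * (Az u) x‖ := norm_add_le _ _
            _ = ‖u x - (s : ℂ) * (Az u) x‖ + s * ‖(Az u) x‖ := by
                rw [norm_mul, Complex.norm_real, Real.norm_eq_abs, abs_of_nonneg hs0]
        have hs' : s * ‖(Az u) x‖ ≤ (∫ y in Ω, J x y * ‖u y‖) / a x := by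
          calc s * ‖(Az u) x‖ ≤ 1 * ((∫ y in Ω, J x y * ‖u y‖) / a x) :=
                mul_le_mul hs1 hAzux (norm_nonneg _) zero_le_one
            _ = _ := one_mul _
        linarith
      · rw [h1]; exact norm_nonneg _
    have hvpos : (0 : Lp ℝ 1 (volume.restrict Ω)) ≤ v := by
      rw [← Lp.coeFn_nonneg]
      filter_upwards [hptw] with x hx
      simpa using hx.2
    have h1mA0 : ((1 - A0 : Lp ℝ 1 (volume.restrict Ω) →L[ℝ] Lp ℝ 1 (volume.restrict Ω))) v
        = v - A0 v := by
      simp [ContinuousLinearMap.sub_apply, ContinuousLinearMap.one_apply]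
    have hle : ((1 - A0 : Lp ℝ 1 (volume.restrict Ω) →L[ℝ] Lp ℝ 1 (volume.restrict Ω)) v)
        ≤ W := by
      rw [h1mA0, ← Lp.coeFn_le]
      filter_upwards [hptw, Lp.coeFn_sub v (A0 v)] with x hx h2
      rw [h2]
      simp only [Pi.sub_apply]
      linarith [hx.1]
    set R := Ring.inverse
      (1 - A0 : Lp ℝ 1 (volume.restrict Ω) →L[ℝ] Lp ℝ 1 (volume.restrict Ω)) with hRdef
    have hid : R * (1 - A0) = 1 := Ring.inverse_mul_cancel _ hRunit
    have hv2 : v = R ((1 - A0) v) := by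
      rw [← ContinuousLinearMap.mul_apply, hid, ContinuousLinearMap.one_apply]
    have hveq : v = R W - R (W - (1 - A0) v) := by
      rw [map_sub, _root_.sub_sub_cancel]
      exact hv2
    have hvle : v ≤ R W := by
      rw [hveq]
      exact sub_le_self _ (hRpos _ (sub_nonneg.2 hle))
    have hnv : ‖v‖ ≤ ‖R W‖ :=
      norm_le_norm_of_abs_le_abs (by
        rw [abs_of_nonneg hvpos]
        exact le_trans hvle (le_abs_self _))
    calc ‖u‖ = ‖v‖ := by rw [hvdef, absLp_norm]
      _ ≤ ‖R W‖ := hnv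
      _ ≤ ‖R‖ * ‖W‖ := ContinuousLinearMap.le_opNorm _ _
      _ = ‖R‖ * ‖w‖ := by rw [hWdef, absLp_norm]
  have hAzUnit : IsUnit (1 - Az) :=
    isUnit_one_sub_of_bound Az _ (norm_nonneg _) hKb
  -- Mz is a unit with inverse Mzi
  have hMzu1 : Mz * Mzi = 1 := by
    refine ContinuousLinearMap.ext fun u => ?_
    rw [ContinuousLinearMap.mul_apply, ContinuousLinearMap.one_apply]
    refine Lp.ext ?_
    filter_upwards [mulCLM_apply hMzmeas hMzbd (Mzi u), mulCLM_apply hgmeas hgbd u, hza]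
      with x h1 h2 h3
    rw [h1, h2, ← mul_assoc, mul_inv_cancel₀ h3.2.2, one_mul]
  have hMzu2 : Mzi * Mz = 1 := by
    refine ContinuousLinearMap.ext fun u => ?_
    rw [ContinuousLinearMap.mul_apply, ContinuousLinearMap.one_apply]
    refine Lp.ext ?_
    filter_upwards [mulCLM_apply hgmeas hgbd (Mz u), mulCLM_apply hMzmeas hMzbd u, hza]
      with x h1 h2 h3
    rw [h1, h2, ← mul_assoc, inv_mul_cancel₀ h3.2.2, one_mul]
  have hMzUnit : IsUnit Mz := ⟨⟨Mz, Mzi, hMzu1, hMzu2⟩, rfl⟩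
  -- factorization
  have hfac : algebraMap ℂ (Lp ℂ 1 (volume.restrict Ω) →L[ℂ] Lp ℂ 1 (volume.restrict Ω)) z
      - Lc = Mz * (1 - Az) := by
    rw [Algebra.algebraMap_eq_smul_one]
    refine ContinuousLinearMap.ext fun u => ?_
    have hlhs : (z • (1 : Lp ℂ 1 (volume.restrict Ω) →L[ℂ] Lp ℂ 1 (volume.restrict Ω))
        - Lc) u = z • u - Lc u := by
      simp [ContinuousLinearMap.sub_apply]
    have hrhs : (Mz * (1 - Az)) u = Mz (u - Mzi (Jc u)) := rfl
    rw [hlhs, hrhs]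
    refine Lp.ext ?_
    filter_upwards [hLc u, hJc u, mulCLM_apply hMzmeas hMzbd (u - Mzi (Jc u)),
      Lp.coeFn_sub u (Mzi (Jc u)), mulCLM_apply hgmeas hgbd (Jc u),
      Lp.coeFn_sub (z • u) (Lc u), Lp.coeFn_smul z u, hza] with x h1 h2 h3 h4 h5 h6 h7 h8
    rw [h6]
    simp only [Pi.sub_apply]
    rw [h7]
    simp only [Pi.smul_apply, smul_eq_mul]
    rw [h1, h3, h4]
    simp only [Pi.sub_apply]
    rw [h5, h2]
    have hne := h8.2.2
    field_simp
    ring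
  have hunit : IsUnit (algebraMap ℂ
      (Lp ℂ 1 (volume.restrict Ω) →L[ℂ] Lp ℂ 1 (volume.restrict Ω)) z - Lc) := by
    rw [hfac]
    exact hMzUnit.mul hAzUnit
  exact spectrum.notMem_iff.mpr hunit hz
end

section
/- Fix 0 < α < 1 and c′ > 0, and set c = 2∫_{−π}^{π} |θ|^{−α} dθ = 4π^{1−α}/(1−α). On the circle S¹, identified with [−π, π) with Lebesgue measure, let a(θ) = c|θ|^α + c′ and define the operator L on L¹(S¹) by (Lu)(θ) = (1/(2π))∫_{S¹} u(ω) dω − a(θ)u(θ). Then L has no eigenvalues: there is no μ ∈ ℝ and nonzero v ∈ L¹(S¹) with Lv = μv. -/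
open MeasureTheory ENNReal Set Real


lemma aux_bernoulli {α t s : ℝ} (hα0 : 0 < α) (hα1 : α < 1) (ht : 0 < t) (hts : t ≤ s) :
    s ^ α - t ^ α ≤ α * t ^ (α - 1) * (s - t) := by
  have hu : 0 ≤ (s - t) / t := div_nonneg (by linarith) ht.le
  have h := rpow_one_add_le_one_add_mul_self (s := (s - t) / t) (by linarith) hα0.le hα1.le
  have h1 : (1 : ℝ) + (s - t) / t = s / t := by field_simp; ring
  rw [h1] at h
  have h2 : (s / t) ^ α = s ^ α / t ^ α := Real.div_rpow (by linarith) ht.le α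
  rw [h2] at h
  have htα : (0 : ℝ) < t ^ α := Real.rpow_pos_of_pos ht α
  have h3 : s ^ α ≤ t ^ α * (1 + α * ((s - t) / t)) := by
    rw [div_le_iff₀ htα] at h
    linarith [h]
  have h4 : t ^ (α - 1) = t ^ α / t := by
    rw [Real.rpow_sub ht, Real.rpow_one]
  rw [h4]
  have : t ^ α * (1 + α * ((s - t) / t)) = t ^ α + α * (t ^ α / t) * (s - t) := by
    field_simp
  linarith [h3, this ▸ h3]

lemma aux_J {α : ℝ} (hα0 : 0 < α) (hα1 : α < 1) :
    IntervalIntegrable (fun θ : ℝ => |θ| ^ (-α)) volume (-π) π ∧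
    ∫ θ in (-π)..π, |θ| ^ (-α) = 2 * π ^ (1 - α) / (1 - α) := by
  have hπ := Real.pi_pos
  have h1 : IntervalIntegrable (fun x : ℝ => x ^ (-α)) volume 0 π :=
    intervalIntegral.intervalIntegrable_rpow' (by linarith)
  have hIoc : IntegrableOn (fun x : ℝ => x ^ (-α)) (Ioc 0 π) volume :=
    (intervalIntegrable_iff_integrableOn_Ioc_of_le hπ.le).1 h1
  have hIocf : IntegrableOn (fun θ : ℝ => |θ| ^ (-α)) (Ioc 0 π) volume := by
    apply hIoc.congr_fun _ measurableSet_Ioc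
    intro x hx
    simp only [abs_of_pos hx.1]
  have hf0π : IntervalIntegrable (fun θ : ℝ => |θ| ^ (-α)) volume 0 π :=
    (intervalIntegrable_iff_integrableOn_Ioc_of_le hπ.le).2 hIocf
  have hfneg : IntervalIntegrable (fun θ : ℝ => |θ| ^ (-α)) volume (-π) 0 := by
    have := (IntervalIntegrable.iff_comp_neg (f := fun θ : ℝ => |θ| ^ (-α)) (by simp)).mp hf0π
    simp only [abs_neg, neg_zero] at this
    exact this.symm
  have htot : IntervalIntegrable (fun θ : ℝ => |θ| ^ (-α)) volume (-π) π :=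
    hfneg.trans hf0π
  refine ⟨htot, ?_⟩
  have hv1 : ∫ x in (0:ℝ)..π, |x| ^ (-α) = π ^ (1 - α) / (1 - α) := by
    have hEq : EqOn (fun θ : ℝ => |θ| ^ (-α)) (fun x : ℝ => x ^ (-α)) (Set.uIcc 0 π) := by
      intro x hx
      rw [Set.uIcc_of_le hπ.le] at hx
      simp only [abs_of_nonneg hx.1]
    rw [intervalIntegral.integral_congr hEq,
      integral_rpow (Or.inl (by linarith : (-1:ℝ) < -α))]
    rw [Real.zero_rpow (by linarith : -α + 1 ≠ 0)]
    ring_nf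
  have hv2 : ∫ x in (-π)..(0:ℝ), |x| ^ (-α) = ∫ x in (0:ℝ)..π, |x| ^ (-α) := by
    have := intervalIntegral.integral_comp_neg (a := (0:ℝ)) (b := π)
      (f := fun θ : ℝ => |θ| ^ (-α))
    simp only [abs_neg, neg_zero] at this
    exact this.symm
  have hadd := intervalIntegral.integral_add_adjacent_intervals hfneg hf0π
  rw [← hadd, hv2, hv1]
  ring


/-- On the circle S¹ = [−π, π) with Lebesgue measure, with
c = 4π^{1−α}/(1−α) (= 2∫_{S¹}|θ|^{−α}dθ), a(θ) = c|θ|^α + c′ and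
(Lu)(θ) = (1/(2π))∫_{S¹} u(ω) dω − a(θ)u(θ), the operator L has no eigenvalues:
there is no μ ∈ ℝ and nonzero v ∈ L¹(S¹) with Lv = μv. -/
theorem stmt_19
    (α : ℝ) (hα0 : 0 < α) (hα1 : α < 1)
    (c' : ℝ) (hc' : 0 < c') :
    ¬ ∃ (m : ℝ) (v : Lp ℝ 1 (volume.restrict (Set.Ico (-Real.pi) Real.pi))),
      v ≠ 0 ∧
      (∀ᵐ θ ∂(volume.restrict (Set.Ico (-Real.pi) Real.pi)),
        (1 / (2 * Real.pi)) * (∫ ω in Set.Ico (-Real.pi) Real.pi, v ω) -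
          (4 * Real.pi ^ (1 - α) / (1 - α) * |θ| ^ α + c') * v θ = m * v θ) := by
  have hπ := Real.pi_pos
  have hπα : (0:ℝ) < π ^ (1 - α) := Real.rpow_pos_of_pos hπ _
  set c : ℝ := 4 * π ^ (1 - α) / (1 - α) with hcdef
  have hc0 : 0 < c := div_pos (by linarith) (by linarith)
  set μ := volume.restrict (Set.Ico (-π) π) with hμdef
  rintro ⟨m, v, hv0, heq⟩
  have hvint : Integrable (fun θ => v θ) μ := L1.integrable_coeFn v
  set K : ℝ := ∫ ω, v ω ∂μ with hKdef
  set K' : ℝ := 1 / (2 * π) * K with hK'def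
  have heq' : ∀ᵐ θ ∂μ, (m + (c * |θ| ^ α + c')) * v θ = K' := by
    filter_upwards [heq] with θ h
    linear_combination -h
  by_cases hK'0 : K' = 0
  · -- case K' = 0 : v = 0 a.e., contradiction with v ≠ 0
    apply hv0
    rw [MeasureTheory.Lp.eq_zero_iff_ae_eq_zero]
    have hnull : volume {θ : ℝ | m + (c * |θ| ^ α + c') = 0} = 0 := by
      set s : ℝ := ((-(m + c')) / c) ^ α⁻¹ with hsdef
      have hsub : {θ : ℝ | m + (c * |θ| ^ α + c') = 0} ⊆ {s, -s} := by
        intro θ hθ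
        simp only [Set.mem_setOf_eq] at hθ
        have h1 : |θ| ^ α = (-(m + c')) / c := by
          field_simp
          linarith
        have h2 : |θ| = s := by
          rw [hsdef, ← h1, Real.rpow_rpow_inv (abs_nonneg θ) hα0.ne']
        have hs0 : 0 ≤ s := by
          rw [← h2]; exact abs_nonneg θ
        rcases (abs_eq hs0).mp h2 with h | h <;> simp [h]
      have hcnt : ({s, -s} : Set ℝ).Countable := (Set.countable_singleton _).insert _
      exact measure_mono_null hsub (hcnt.measure_zero _)
    have hae0 : ∀ᵐ θ ∂μ, m + (c * |θ| ^ α + c') ≠ 0 := by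
      rw [hμdef]
      apply ae_restrict_of_ae
      rw [ae_iff]
      simpa only [not_not] using hnull
    filter_upwards [heq', hae0] with θ h hne
    rw [hK'0] at h
    simpa using (mul_eq_zero.mp h).resolve_left hne
  · -- case K' ≠ 0
    have hae : ∀ᵐ θ ∂μ, m + (c * |θ| ^ α + c') ≠ 0 ∧
        v θ = K' * (m + (c * |θ| ^ α + c'))⁻¹ := by
      filter_upwards [heq'] with θ h
      have hne : m + (c * |θ| ^ α + c') ≠ 0 := by
        intro h0; rw [h0, zero_mul] at h; exact hK'0 h.symm
      refine ⟨hne, ?_⟩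
      field_simp
      linear_combination h
    have hhint : Integrable (fun θ => (m + (c * |θ| ^ α + c'))⁻¹) μ := by
      apply (hvint.const_mul K'⁻¹).congr
      filter_upwards [hae] with θ hθ
      rw [hθ.2, ← mul_assoc, inv_mul_cancel₀ hK'0, one_mul]
    have hhval : ∫ θ, (m + (c * |θ| ^ α + c'))⁻¹ ∂μ = 2 * π := by
      have h1 : ∫ θ, K' * (m + (c * |θ| ^ α + c'))⁻¹ ∂μ = K := by
        rw [hKdef]
        apply integral_congr_ae
        filter_upwards [hae] with θ hθ
        exact hθ.2.symm
      rw [integral_const_mul] at h1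
      have hK2 : K = 2 * π * K' := by
        rw [hK'def]; field_simp
      rw [hK2] at h1
      exact mul_left_cancel₀ hK'0 (h1.trans (mul_comm _ _))
    rcases le_or_gt 0 (m + c') with hmc | hmc
    · -- a: denominator positive, integrand ≤ c⁻¹|θ|^{-α}, integral ≤ 1/2 < 2π
      have hIocInt : IntegrableOn (fun θ : ℝ => |θ| ^ (-α)) (Ioc (-π) π) volume :=
        (intervalIntegrable_iff_integrableOn_Ioc_of_le (by linarith)).1 (aux_J hα0 hα1).1
      have hIcoInt : IntegrableOn (fun θ : ℝ => |θ| ^ (-α)) (Ico (-π) π) volume := by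
        rwa [IntegrableOn, Measure.restrict_congr_set Ico_ae_eq_Ioc]
      have hbint : Integrable (fun θ : ℝ => c⁻¹ * |θ| ^ (-α)) μ := by
        rw [hμdef]; exact hIcoInt.const_mul _
      have hne0 : ∀ᵐ θ ∂μ, θ ≠ 0 := by
        rw [hμdef]
        apply ae_restrict_of_ae
        rw [ae_iff]
        simp only [not_not]
        have hset : {a : ℝ | a = 0} = {0} := by ext x; simp
        rw [hset]
        exact measure_singleton 0
      have hle : ∀ᵐ θ ∂μ, (m + (c * |θ| ^ α + c'))⁻¹ ≤ c⁻¹ * |θ| ^ (-α) := by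
        filter_upwards [hne0] with θ hθ
        have habs : 0 < |θ| := abs_pos.mpr hθ
        have hpow : 0 < |θ| ^ α := Real.rpow_pos_of_pos habs α
        have hA : 0 < c * |θ| ^ α := mul_pos hc0 hpow
        have h2 := one_div_le_one_div_of_le hA
          (show c * |θ| ^ α ≤ m + (c * |θ| ^ α + c') by linarith)
        rw [one_div, one_div] at h2
        calc (m + (c * |θ| ^ α + c'))⁻¹ ≤ (c * |θ| ^ α)⁻¹ := h2
          _ = c⁻¹ * |θ| ^ (-α) := by
              rw [mul_inv, Real.rpow_neg (abs_nonneg θ)]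
      have hmono := integral_mono_ae hhint hbint hle
      have hbval : ∫ θ, c⁻¹ * |θ| ^ (-α) ∂μ = 1 / 2 := by
        rw [integral_const_mul]
        have hJ : ∫ θ, |θ| ^ (-α) ∂μ = 2 * π ^ (1 - α) / (1 - α) := by
          have h4 := (aux_J hα0 hα1).2
          rw [intervalIntegral.integral_of_le (by linarith)] at h4
          rw [hμdef, Measure.restrict_congr_set Ico_ae_eq_Ioc]
          exact h4
        rw [hJ, hcdef, inv_div]
        have h1α : (1:ℝ) - α ≠ 0 := by linarith
        field_simp
        ring
      rw [hhval, hbval] at hmono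
      linarith [Real.pi_gt_three]
    · rcases le_or_gt (m + (c * π ^ α + c')) 0 with hbig | hbig
      · -- b: denominator nonpositive everywhere, integral ≤ 0 < 2π
        have hle0 : ∀ᵐ θ ∂μ, (m + (c * |θ| ^ α + c'))⁻¹ ≤ 0 := by
          rw [hμdef]
          filter_upwards [ae_restrict_mem measurableSet_Ico] with θ hθ
          have h1 : |θ| ≤ π := abs_le.mpr ⟨hθ.1, hθ.2.le⟩
          have h2 : |θ| ^ α ≤ π ^ α := Real.rpow_le_rpow (abs_nonneg θ) h1 hα0.le
          have h3 : c * |θ| ^ α ≤ c * π ^ α := mul_le_mul_of_nonneg_left h2 hc0.le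
          exact inv_nonpos.mpr (by linarith)
        have hnp := integral_nonpos_of_ae hle0
        rw [hhval] at hnp
        linarith
      · -- c: denominator changes sign at t, v not integrable near t
        set r : ℝ := (-(m + c')) / c with hrdef
        have hr0 : 0 < r := div_pos (by linarith) hc0
        have hrπ : r < π ^ α := by
          rw [hrdef, div_lt_iff₀ hc0, mul_comm]
          linarith
        set t : ℝ := r ^ α⁻¹ with htdef
        have ht0 : 0 < t := Real.rpow_pos_of_pos hr0 _
        have htα : t ^ α = r := Real.rpow_inv_rpow hr0.le hα0.ne'
        have htπ : t < π := by
          by_contra hcon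
          push_neg at hcon
          have hmono3 := Real.rpow_le_rpow hπ.le hcon hα0.le
          rw [htα] at hmono3
          linarith
        have hnotint : ¬ IntervalIntegrable (fun x : ℝ => (x - t)⁻¹) volume t π := by
          rw [intervalIntegrable_sub_inv_iff]
          push_neg
          exact ⟨htπ.ne, left_mem_uIcc⟩
        apply hnotint
        rw [intervalIntegrable_iff_integrableOn_Ioo_of_le htπ.le]
        have hvIoo : IntegrableOn (fun θ => v θ) (Ioo t π) volume := by
          have h0 : IntegrableOn (fun θ => v θ) (Ico (-π) π) volume := hvint
          exact h0.mono_set (fun x hx => ⟨by linarith [hx.1], hx.2⟩)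
        set C : ℝ := c * α * t ^ (α - 1) / |K'| with hCdef
        have htα1 : (0:ℝ) < t ^ (α - 1) := Real.rpow_pos_of_pos ht0 _
        have hK'abs : (0:ℝ) < |K'| := abs_pos.mpr hK'0
        have hC0 : 0 < C := div_pos (by positivity) hK'abs
        have hCK : C * |K'| = c * α * t ^ (α - 1) := by
          rw [hCdef]; field_simp
        apply Integrable.mono' ((hvIoo.abs).const_mul C)
        · exact ((measurable_id.sub_const t).inv).aestronglyMeasurable
        · have haeIoo : ∀ᵐ θ ∂volume.restrict (Ioo t π),
              v θ = K' * (m + (c * |θ| ^ α + c'))⁻¹ := by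
            apply ae_restrict_of_ae_restrict_of_subset
              (fun x hx => (⟨by linarith [hx.1], hx.2⟩ : x ∈ Set.Ico (-π) π))
            exact hae.mono fun θ h => h.2
          filter_upwards [haeIoo, ae_restrict_mem measurableSet_Ioo] with θ hv hθ
          obtain ⟨hθ1, hθ2⟩ := hθ
          have hθ0 : 0 < θ := lt_trans ht0 hθ1
          have habs : |θ| = θ := abs_of_pos hθ0
          have hAval : m + (c * |θ| ^ α + c') = c * (θ ^ α - t ^ α) := by
            rw [habs, htα, hrdef]
            field_simp
            ring
          have hmono2 : t ^ α < θ ^ α := Real.rpow_lt_rpow ht0.le hθ1 hα0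
          have hApos : 0 < m + (c * |θ| ^ α + c') := by
            rw [hAval]; exact mul_pos hc0 (by linarith)
          have hkey : θ ^ α - t ^ α ≤ α * t ^ (α - 1) * (θ - t) :=
            aux_bernoulli hα0 hα1 ht0 hθ1.le
          have hθt : 0 < θ - t := by linarith
          have hvabs : |v θ| = |K'| * (m + (c * |θ| ^ α + c'))⁻¹ := by
            rw [hv, abs_mul, abs_of_pos (inv_pos.mpr hApos)]
          rw [Real.norm_eq_abs, abs_of_pos (inv_pos.mpr hθt), hvabs]
          have hd : m + (c * |θ| ^ α + c') ≤ c * α * t ^ (α - 1) * (θ - t) := by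
            rw [hAval]
            calc c * (θ ^ α - t ^ α) ≤ c * (α * t ^ (α - 1) * (θ - t)) :=
                  mul_le_mul_of_nonneg_left hkey hc0.le
              _ = c * α * t ^ (α - 1) * (θ - t) := by ring
          have h5 : (c * α * t ^ (α - 1) * (θ - t))⁻¹ ≤ (m + (c * |θ| ^ α + c'))⁻¹ := by
            have h6 := one_div_le_one_div_of_le hApos hd
            rwa [one_div, one_div] at h6
          calc (θ - t)⁻¹
              = (c * α * t ^ (α - 1)) * (c * α * t ^ (α - 1) * (θ - t))⁻¹ := by
                field_simp
            _ ≤ (c * α * t ^ (α - 1)) * (m + (c * |θ| ^ α + c'))⁻¹ :=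
                mul_le_mul_of_nonneg_left h5 (by positivity)
            _ = C * (|K'| * (m + (c * |θ| ^ α + c'))⁻¹) := by
                rw [← hCK]; ring
end
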